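/- arXiv:0812.3807 — 3 statements merged into one kernel-verified Lean document; each statement's English description precedes it below -/
import Mathlib

section
/- Let R be a commutative ring and M an R-module of finite projective dimension. Then the Gorenstein projective dimension of M equals its projective dimension: Gpd_R M = pd_R M. -/
universe u

open TensorProduct

/-- A `ℤ`-indexed chain complex of `R`-modules: modules `X i` with
differentials `d i : X (i+1) →ₗ[R] X i` satisfying `d ∘ d = 0`. -/
structure ModComplex (R : Type u) [CommRing R] : Type (u + 1) where
  X : ℤ → Type u
  [addCommGroup : ∀ i, AddCommGroup (X i)]
  [module : ∀ i, Module R (X i)]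
  d : ∀ i : ℤ, X (i + 1) →ₗ[R] X i
  dd : ∀ i : ℤ, (d i).comp (d (i + 1)) = 0

attribute [instance] ModComplex.addCommGroup ModComplex.module

namespace ModComplex

variable {R : Type u} [CommRing R] (L : ModComplex R)

/-- The complex is acyclic: exact at every spot. -/
def Acyclic : Prop := ∀ i : ℤ, Function.Exact (L.d (i + 1)) (L.d i)

/-- The complex `Hom_R(L, N)` is acyclic. -/
def HomAcyclic (N : Type u) [AddCommGroup N] [Module R N] : Prop :=
  ∀ i : ℤ, Function.Exact
    (fun φ : L.X i →ₗ[R] N => φ.comp (L.d i))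
    (fun φ : L.X (i + 1) →ₗ[R] N => φ.comp (L.d (i + 1)))

/-- The complex `Hom_R(E, L)` is acyclic. -/
def CoHomAcyclic (E : Type u) [AddCommGroup E] [Module R E] : Prop :=
  ∀ i : ℤ, Function.Exact
    (fun φ : E →ₗ[R] L.X (i + 1 + 1) => (L.d (i + 1)).comp φ)
    (fun φ : E →ₗ[R] L.X (i + 1) => (L.d i).comp φ)

/-- The complex `E ⊗_R L` is acyclic. -/
def TensorAcyclic (E : Type u) [AddCommGroup E] [Module R E] : Prop :=
  ∀ i : ℤ, Function.Exact
    (LinearMap.lTensor E (L.d (i + 1)))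
    (LinearMap.lTensor E (L.d i))

/-- The complex consists of finitely generated projective modules. -/
def FGProj : Prop :=
  ∀ i : ℤ, Module.Finite R (L.X i) ∧ Module.Projective R (L.X i)

/-- A totally acyclic complex: an acyclic complex of finitely generated
projective modules such that `Hom_R(L, R)` is acyclic. -/
def TotallyAcyclic : Prop := L.Acyclic ∧ L.FGProj ∧ L.HomAcyclic R

end ModComplex

/-- `M` is (isomorphic to) the cokernel of the differential `d 0 : X 1 → X 0`. -/
def IsCokerOf {R : Type u} [CommRing R] (L : ModComplex R)
    (M : Type u) [AddCommGroup M] [Module R M] : Prop :=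
  ∃ f : L.X 0 →ₗ[R] M, Function.Surjective f ∧ LinearMap.ker f = LinearMap.range (L.d 0)

/-- `M` is (isomorphic to) the kernel of the differential `d 0 : X 1 → X 0`. -/
def IsKerOf {R : Type u} [CommRing R] (L : ModComplex R)
    (M : Type u) [AddCommGroup M] [Module R M] : Prop :=
  ∃ f : M →ₗ[R] L.X 1, Function.Injective f ∧ LinearMap.range f = LinearMap.ker (L.d 0)

/-- `M` is totally reflexive: it is a cokernel of a differential in a totally
acyclic complex of finitely generated projective modules. -/
def IsTotallyReflexive (R : Type u) [CommRing R]
    (M : Type u) [AddCommGroup M] [Module R M] : Prop :=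
  ∃ L : ModComplex R, L.TotallyAcyclic ∧ IsCokerOf L M

/-- Gorenstein projective module. -/
def IsGorensteinProjective (R : Type u) [CommRing R]
    (A : Type u) [AddCommGroup A] [Module R A] : Prop :=
  ∃ L : ModComplex R, L.Acyclic ∧ (∀ i, Module.Projective R (L.X i)) ∧
    (∀ (Q : Type u) [AddCommGroup Q] [Module R Q],
      Module.Projective R Q → L.HomAcyclic Q) ∧
    IsCokerOf L A

/-- Gorenstein injective module. -/
def IsGorensteinInjective (R : Type u) [CommRing R]
    (B : Type u) [AddCommGroup B] [Module R B] : Prop :=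
  ∃ L : ModComplex R, L.Acyclic ∧ (∀ i, Module.Injective R (L.X i)) ∧
    (∀ (E : Type u) [AddCommGroup E] [Module R E],
      Module.Injective R E → L.CoHomAcyclic E) ∧
    IsKerOf L B

/-- Gorenstein flat module. -/
def IsGorensteinFlat (R : Type u) [CommRing R]
    (M : Type u) [AddCommGroup M] [Module R M] : Prop :=
  ∃ L : ModComplex R, L.Acyclic ∧ (∀ i, Module.Flat R (L.X i)) ∧
    (∀ (E : Type u) [AddCommGroup E] [Module R E],
      Module.Injective R E → L.TensorAcyclic E) ∧
    IsCokerOf L M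

/-- `M` has projective dimension at most `n`. -/
def ProjDimLe (R : Type u) [CommRing R] :
    ℕ → ∀ (M : Type u) [AddCommGroup M] [Module R M], Prop
  | 0, M, _, _ => Module.Projective R M
  | n + 1, M, _, _ =>
    ∃ (P : Type u) (_ : AddCommGroup P) (_ : Module R P) (f : P →ₗ[R] M),
      Module.Projective R P ∧ Function.Surjective f ∧
        ProjDimLe R n (LinearMap.ker f)

/-- `M` has flat dimension at most `n`. -/
def FlatDimLe (R : Type u) [CommRing R] :
    ℕ → ∀ (M : Type u) [AddCommGroup M] [Module R M], Prop
  | 0, M, _, _ => Module.Flat R M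
  | n + 1, M, _, _ =>
    ∃ (F : Type u) (_ : AddCommGroup F) (_ : Module R F) (f : F →ₗ[R] M),
      Module.Flat R F ∧ Function.Surjective f ∧
        FlatDimLe R n (LinearMap.ker f)

/-- `M` has Gorenstein projective dimension at most `n`. -/
def GProjDimLe (R : Type u) [CommRing R] :
    ℕ → ∀ (M : Type u) [AddCommGroup M] [Module R M], Prop
  | 0, M, _, _ => IsGorensteinProjective R M
  | n + 1, M, _, _ =>
    ∃ (P : Type u) (_ : AddCommGroup P) (_ : Module R P) (f : P →ₗ[R] M),
      IsGorensteinProjective R P ∧ Function.Surjective f ∧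
        GProjDimLe R n (LinearMap.ker f)

/-- The projective dimension, as an element of `ℕ∞`. -/
noncomputable def projDim (R : Type u) [CommRing R]
    (M : Type u) [AddCommGroup M] [Module R M] : ℕ∞ :=
  sInf {n : ℕ∞ | ∃ m : ℕ, n = m ∧ ProjDimLe R m M}

/-- The Gorenstein projective dimension, as an element of `ℕ∞`. -/
noncomputable def gProjDim (R : Type u) [CommRing R]
    (M : Type u) [AddCommGroup M] [Module R M] : ℕ∞ :=
  sInf {n : ℕ∞ | ∃ m : ℕ, n = m ∧ GProjDimLe R m M}
section Helpers

variable {R : Type u} [CommRing R]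

/-- A module with a retraction from a projective module is projective. -/
theorem proj_of_retract {M P : Type u} [AddCommGroup M] [Module R M]
    [AddCommGroup P] [Module R P] (hP : Module.Projective R P)
    (i : M →ₗ[R] P) (r : P →ₗ[R] M) (h : r.comp i = LinearMap.id) :
    Module.Projective R M := by
  haveI := hP
  exact Module.Projective.of_split i r h

theorem proj_of_equiv {M N : Type u} [AddCommGroup M] [Module R M]
    [AddCommGroup N] [Module R N] (hM : Module.Projective R M)
    (e : M ≃ₗ[R] N) : Module.Projective R N := by
  haveI := hM
  exact Module.Projective.of_equiv e

theorem proj_of_subsingleton {M : Type u} [AddCommGroup M] [Module R M]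
    [Subsingleton M] : Module.Projective R M :=
  proj_of_retract (M := M) (P := R) (Module.Projective.of_free)
    0 0 (by ext x; exact Subsingleton.elim _ _)

/-- kernel of a surjection onto a projective module is projective -/
theorem ker_proj_of_section {F M : Type u} [AddCommGroup F] [Module R F]
    [AddCommGroup M] [Module R M] (hF : Module.Projective R F)
    (f : F →ₗ[R] M) (s : M →ₗ[R] F) (hs : f.comp s = LinearMap.id) :
    Module.Projective R (LinearMap.ker f) := by
  refine proj_of_retract hF (LinearMap.ker f).subtype
    (LinearMap.codRestrict _ (LinearMap.id - s.comp f) ?_) ?_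
  · intro x
    simp only [LinearMap.mem_ker, LinearMap.sub_apply, LinearMap.id_apply,
      LinearMap.comp_apply, map_sub]
    rw [← LinearMap.comp_apply f s, hs]; simp
  · ext ⟨x, hx⟩
    have : f x = 0 := hx
    simp [LinearMap.codRestrict, this]

/-- the split equivalence: a section of a surjection gives `E ≃ ker π × W`. -/
noncomputable def splitEquiv {E W : Type u} [AddCommGroup E] [Module R E]
    [AddCommGroup W] [Module R W] (π : E →ₗ[R] W) (σ : W →ₗ[R] E)
    (h : π.comp σ = LinearMap.id) :
    E ≃ₗ[R] (LinearMap.ker π) × W := by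
  refine LinearEquiv.ofLinear
    (LinearMap.prod (LinearMap.codRestrict _ (LinearMap.id - σ.comp π) ?_) π)
    ((LinearMap.ker π).subtype.comp (LinearMap.fst R _ _) + σ.comp (LinearMap.snd R _ _))
    ?_ ?_
  · intro x
    simp only [LinearMap.mem_ker, LinearMap.sub_apply, LinearMap.id_apply,
      LinearMap.comp_apply, map_sub]
    rw [← LinearMap.comp_apply π σ, h]; simp
  · apply LinearMap.ext; rintro ⟨⟨x, hx⟩, w⟩
    have hx0 : π x = 0 := hx
    have hσ : π (σ w) = w := LinearMap.congr_fun h w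
    apply Prod.ext
    · apply Subtype.ext
      simp [LinearMap.codRestrict, hx0, hσ]
    · simp [hx0, hσ]
  · apply LinearMap.ext; intro x
    have hσ : ∀ y, π (σ y) = y := fun y => LinearMap.congr_fun h y
    simp [LinearMap.codRestrict, hσ]

end Helpers
section LiftProp

variable (R : Type u) [CommRing R]

/-- `Ext¹(M, Q) = 0` for all projective `Q`, phrased as a lifting property:
maps out of `M` lift along surjections with projective kernel. -/
def LiftProp (M : Type u) [AddCommGroup M] [Module R M] : Prop :=
  ∀ (Q B N : Type u) [AddCommGroup Q] [Module R Q] [AddCommGroup B] [Module R B]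
    [AddCommGroup N] [Module R N]
    (j : Q →ₗ[R] B) (p : B →ₗ[R] N) (u : M →ₗ[R] N),
    Module.Projective R Q → Function.Injective j → Function.Surjective p →
    Function.Exact j p → ∃ v : M →ₗ[R] B, p.comp v = u

variable {R}

theorem liftProp_of_projective {M : Type u} [AddCommGroup M] [Module R M]
    (hM : Module.Projective R M) : LiftProp R M := by
  intro Q B N _ _ _ _ _ _ j p u _ _ hp _
  haveI := hM
  exact Module.projective_lifting_property p u hp

theorem liftProp_of_equiv {M N : Type u} [AddCommGroup M] [Module R M]
    [AddCommGroup N] [Module R N] (e : M ≃ₗ[R] N) (hM : LiftProp R M) :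
    LiftProp R N := by
  intro Q B N' _ _ _ _ _ _ j p u hQ hj hp hex
  obtain ⟨v, hv⟩ := hM Q B N' j p (u.comp e.toLinearMap) hQ hj hp hex
  refine ⟨v.comp e.symm.toLinearMap, ?_⟩
  ext x
  have := LinearMap.congr_fun hv (e.symm x)
  simpa using this

theorem liftProp_prod {M N : Type u} [AddCommGroup M] [Module R M]
    [AddCommGroup N] [Module R N] (hM : LiftProp R M) (hN : LiftProp R N) :
    LiftProp R (M × N) := by
  intro Q B N' _ _ _ _ _ _ j p u hQ hj hp hex
  obtain ⟨vM, hvM⟩ := hM Q B N' j p (u.comp (LinearMap.inl R M N)) hQ hj hp hex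
  obtain ⟨vN, hvN⟩ := hN Q B N' j p (u.comp (LinearMap.inr R M N)) hQ hj hp hex
  refine ⟨vM.comp (LinearMap.fst R M N) + vN.comp (LinearMap.snd R M N), ?_⟩
  ext x
  · have := LinearMap.congr_fun hvM x
    simpa using this
  · have := LinearMap.congr_fun hvN x
    simpa using this

/-- From `LiftProp M`, surjections onto `M` with projective kernel split. -/
theorem LiftProp.section {M F : Type u} [AddCommGroup M] [Module R M]
    [AddCommGroup F] [Module R F] (hM : LiftProp R M) (f : F →ₗ[R] M)
    (hf : Function.Surjective f) (hker : Module.Projective R (LinearMap.ker f)) :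
    ∃ s : M →ₗ[R] F, f.comp s = LinearMap.id :=
  hM (LinearMap.ker f) F M (LinearMap.ker f).subtype f LinearMap.id hker
    (Submodule.injective_subtype _) hf (LinearMap.exact_subtype_ker_map f)

end LiftProp

section GPBasic

variable {R : Type u} [CommRing R]

/-- Projective modules are Gorenstein projective, via the contractible complex. -/
theorem gp_of_projective {M : Type u} [AddCommGroup M] [Module R M]
    (hM : Module.Projective R M) : IsGorensteinProjective R M := by
  classical
  refine ⟨⟨fun _ => M × M, fun _ => (LinearMap.inl R M M).comp (LinearMap.snd R M M),
    fun _ => by ext x <;> simp⟩, ?_, ?_, ?_, ?_⟩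
  · intro i y
    constructor
    · intro hy
      have h2 : y.2 = 0 := congrArg Prod.fst hy
      exact ⟨(0, y.1), by simp; exact Prod.ext rfl h2.symm⟩
    · rintro ⟨x, rfl⟩
      simp
  · intro i
    haveI := hM
    exact inferInstance
  · intro Q _ _ _ i ψ
    constructor
    · intro hψ
      have h0 : ∀ a : M, ψ (a, 0) = 0 := by
        intro a
        have := LinearMap.congr_fun hψ (0, a)
        simpa using this
      refine ⟨ψ.comp ((LinearMap.inr R M M).comp (LinearMap.fst R M M)), ?_⟩
      apply LinearMap.ext; rintro ⟨a, b⟩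
      have hab : ψ (a, b) = ψ (a, 0) + ψ (0, b) := by
        rw [← map_add, Prod.mk_add_mk, add_zero, zero_add]
      simp only [LinearMap.comp_apply]
      rw [hab, h0 a, zero_add]
      simp
    · rintro ⟨χ, rfl⟩
      apply LinearMap.ext; rintro ⟨a, b⟩
      simp; exact map_zero χ
  · refine ⟨LinearMap.snd R M M, fun m => ⟨(0, m), rfl⟩, ?_⟩
    ext ⟨a, b⟩
    simp only [LinearMap.mem_ker, LinearMap.snd_apply, LinearMap.mem_range]
    constructor
    · intro hb
      exact ⟨(0, a), by simp [hb.symm]⟩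
    · rintro ⟨x, hx⟩
      have := congrArg Prod.snd hx
      simpa using this.symm

/-- The syzygy of a Gorenstein projective module (w.r.t. the cokernel
presentation coming from its totally acyclic complex) is Gorenstein projective. -/
theorem gp_ker_of_isCoker {G : Type u} [AddCommGroup G] [Module R G]
    (L : ModComplex R) (hAc : L.Acyclic)
    (hP : ∀ i, Module.Projective R (L.X i))
    (hHA : ∀ (Q : Type u) [AddCommGroup Q] [Module R Q],
      Module.Projective R Q → L.HomAcyclic Q)
    (f0 : L.X 0 →ₗ[R] G) (hker : LinearMap.ker f0 = LinearMap.range (L.d 0)) :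
    IsGorensteinProjective R (LinearMap.ker f0) := by
  rw [hker]
  refine ⟨⟨fun i => L.X (i + 1), fun i => L.d (i + 1), fun i => L.dd (i + 1)⟩,
    fun i => hAc (i + 1), fun i => hP (i + 1), fun Q _ _ hQ i => hHA Q hQ (i + 1), ?_⟩
  refine ⟨(L.d 0).rangeRestrict, LinearMap.surjective_rangeRestrict _, ?_⟩
  rw [LinearMap.ker_rangeRestrict]
  exact LinearMap.exact_iff.mp (hAc 0)

end GPBasic
section FactorThru

variable {R : Type u} [CommRing R]

/-- Factor a map through an injection whose range contains its range. -/
noncomputable def factorThru {Q B C : Type u} [AddCommGroup Q] [Module R Q]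
    [AddCommGroup B] [Module R B] [AddCommGroup C] [Module R C]
    (j : Q →ₗ[R] B) (hj : Function.Injective j) (g : C →ₗ[R] B)
    (hg : ∀ x, g x ∈ LinearMap.range j) : C →ₗ[R] Q :=
  (LinearEquiv.ofInjective j hj).symm.toLinearMap.comp
    (g.codRestrict (LinearMap.range j) hg)

theorem factorThru_apply {Q B C : Type u} [AddCommGroup Q] [Module R Q]
    [AddCommGroup B] [Module R B] [AddCommGroup C] [Module R C]
    (j : Q →ₗ[R] B) (hj : Function.Injective j) (g : C →ₗ[R] B)
    (hg : ∀ x, g x ∈ LinearMap.range j) (x : C) :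
    j (factorThru j hj g hg x) = g x := by
  simp [factorThru]

/-- a Gorenstein projective module has the lifting property against
surjections with projective kernel (i.e. `Ext¹(G, proj) = 0`). -/
theorem liftProp_of_gp {G : Type u} [AddCommGroup G] [Module R G]
    (hG : IsGorensteinProjective R G) : LiftProp R G := by
  obtain ⟨L, hAc, hP, hHA, f0, hf0, hker⟩ := hG
  intro Q B N _ _ _ _ _ _ j p u hQ hj hp hex
  haveI := hP 0
  obtain ⟨h0, hh0⟩ := Module.projective_lifting_property p (u.comp f0) hp
  -- h0 ∘ d0 lands in range j = ker p
  have hmem : ∀ x, (h0.comp (L.d 0)) x ∈ LinearMap.range j := by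
    intro x
    have h1 : p (h0 (L.d 0 x)) = u (f0 (L.d 0 x)) := LinearMap.congr_fun hh0 (L.d 0 x)
    have h2 : f0 (L.d 0 x) = 0 := by
      have hm : L.d 0 x ∈ LinearMap.ker f0 := by
        rw [hker]; exact ⟨x, rfl⟩
      exact hm
    have h3 : p ((h0.comp (L.d 0)) x) = 0 := by
      rw [h2, map_zero] at h1
      simpa using h1
    simpa using (hex _).mp h3
  set φ := factorThru j hj (h0.comp (L.d 0)) hmem with hφ
  have hjφ : ∀ x, j (φ x) = h0 ((L.d 0) x) := fun x => factorThru_apply j hj _ hmem x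
  have hφd : φ.comp (L.d (0+1)) = 0 := by
    apply LinearMap.ext; intro y
    apply hj
    rw [LinearMap.zero_apply, map_zero, LinearMap.comp_apply, hjφ,
      ← LinearMap.comp_apply (L.d 0), L.dd 0]
    simp
  obtain ⟨χ, hχ⟩ := (hHA Q hQ 0 φ).mp hφd
  have hχ' : χ.comp (L.d 0) = φ := hχ
  set h' := h0 - j.comp χ with hh'
  have hd0 : ∀ x, h' ((L.d 0) x) = 0 := by
    intro x
    have h1 : j (χ ((L.d 0) x)) = h0 ((L.d 0) x) := by
      rw [← LinearMap.comp_apply χ, hχ', hjφ]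
    simp only [hh', LinearMap.sub_apply, LinearMap.comp_apply]
    rw [h1, sub_self]
  have hle : LinearMap.ker f0 ≤ LinearMap.ker h' := by
    intro x hx
    rw [hker] at hx
    obtain ⟨y, rfl⟩ := hx
    exact hd0 y
  set e := f0.quotKerEquivOfSurjective hf0 with he
  refine ⟨((LinearMap.ker f0).liftQ h' hle).comp e.symm.toLinearMap, ?_⟩
  apply LinearMap.ext; intro g
  obtain ⟨x, rfl⟩ := hf0 g
  have hesymm : e.symm (f0 x) = Submodule.Quotient.mk x := by
    apply e.injective
    rw [e.apply_symm_apply]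
    simp [he, LinearMap.quotKerEquivOfSurjective, LinearMap.quotKerEquivRange_apply_mk]
  rw [LinearMap.comp_apply, LinearMap.comp_apply, LinearEquiv.coe_coe, hesymm,
    Submodule.liftQ_apply, hh']
  have hpj : p (j (χ x)) = 0 := (hex _).mpr ⟨χ x, rfl⟩
  have h1 : p (h0 x) = u (f0 x) := LinearMap.congr_fun hh0 x
  simp [hpj, h1]

end FactorThru
section Transfer

variable {R : Type u} [CommRing R]

/-- The key `Ext²`-style splitting: if `0 → A → E → G → 0` is exact with `G`
Gorenstein projective and `E` has the lifting property, then any short exact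
sequence `0 → Q → D → A → 0` with `Q` projective splits. -/
theorem section_transfer {A E G Q D : Type u}
    [AddCommGroup A] [Module R A] [AddCommGroup E] [Module R E]
    [AddCommGroup G] [Module R G] [AddCommGroup Q] [Module R Q]
    [AddCommGroup D] [Module R D]
    (i : A →ₗ[R] E) (q : E →ₗ[R] G) (hi : Function.Injective i)
    (hq : Function.Surjective q) (hiq : Function.Exact i q)
    (hG : IsGorensteinProjective R G) (hE : LiftProp R E)
    (jD : Q →ₗ[R] D) (π : D →ₗ[R] A) (hQ : Module.Projective R Q)
    (hjD : Function.Injective jD) (hπ : Function.Surjective π)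
    (hexD : Function.Exact jD π) :
    ∃ s : A →ₗ[R] D, π.comp s = LinearMap.id := by
  obtain ⟨L, hAc, hP, hHA, f0, hf0, hker⟩ := hG
  haveI := hP 0
  haveI := hP (0 + 1 : ℤ)
  -- lift f0 along q
  obtain ⟨h0, hh0⟩ := Module.projective_lifting_property q f0 hq
  have hh0' : ∀ x, q (h0 x) = f0 x := fun x => LinearMap.congr_fun hh0 x
  -- the syzygy map a0 : X1 → A
  have hmemA : ∀ x, (h0.comp (L.d 0)) x ∈ LinearMap.range i := by
    intro x
    have h2 : f0 (L.d 0 x) = 0 := by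
      have hm : L.d 0 x ∈ LinearMap.ker f0 := by rw [hker]; exact ⟨x, rfl⟩
      exact hm
    have h3 : q ((h0.comp (L.d 0)) x) = 0 := by
      have h4 := hh0' (L.d 0 x)
      rw [h2] at h4
      simpa using h4
    simpa using (hiq _).mp h3
  set a0 := factorThru i hi (h0.comp (L.d 0)) hmemA with ha0def
  have hia0 : ∀ x, i (a0 x) = h0 (L.d 0 x) := fun x => factorThru_apply i hi _ hmemA x
  -- lift a0 along π
  obtain ⟨t1, ht1⟩ := Module.projective_lifting_property π a0 hπ
  have ht1' : ∀ x, π (t1 x) = a0 x := fun x => LinearMap.congr_fun ht1 x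
  -- t1 ∘ d1 lands in range jD
  have ha0d1 : ∀ z, a0 ((L.d (0 + 1)) z) = 0 := by
    intro z
    apply hi
    rw [hia0, ← LinearMap.comp_apply (L.d 0), L.dd 0]
    simp
  have hmemQ : ∀ z, (t1.comp (L.d (0 + 1))) z ∈ LinearMap.range jD := by
    intro z
    have : π ((t1.comp (L.d (0 + 1))) z) = 0 := by
      simp only [LinearMap.comp_apply]
      rw [ht1', ha0d1]
    simpa using (hexD _).mp this
  set c := factorThru jD hjD (t1.comp (L.d (0 + 1))) hmemQ with hcdef
  have hjc : ∀ z, jD (c z) = t1 ((L.d (0 + 1)) z) := fun z => factorThru_apply jD hjD _ hmemQ z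
  have hcd : c.comp (L.d (0 + 1 + 1)) = 0 := by
    apply LinearMap.ext; intro w
    apply hjD
    have hzw := LinearMap.congr_fun (L.dd (0 + 1)) w
    rw [LinearMap.comp_apply, LinearMap.zero_apply] at hzw
    rw [LinearMap.comp_apply, LinearMap.zero_apply, map_zero, hjc, hzw, map_zero]
  obtain ⟨e1, he1⟩ := (hHA Q hQ (0 + 1) c).mp hcd
  have he1' : e1.comp (L.d (0 + 1)) = c := he1
  set t2 := t1 - jD.comp e1 with ht2def
  have hπjD : ∀ x, π (jD x) = 0 := fun x => (hexD _).mpr ⟨x, rfl⟩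
  have hπt2 : ∀ x, π (t2 x) = a0 x := by
    intro x
    simp only [ht2def, LinearMap.sub_apply, map_sub, LinearMap.comp_apply, hπjD, ht1']
    simp
  have ht2d : ∀ z, t2 ((L.d (0 + 1)) z) = 0 := by
    intro z
    have h1 : jD (e1 ((L.d (0 + 1)) z)) = jD (c z) := by
      rw [← LinearMap.comp_apply e1, he1']
    simp only [ht2def, LinearMap.sub_apply, LinearMap.comp_apply]
    rw [h1, hjc, sub_self]
  -- the pushout-style extension Ehat of E by Q
  set ψm : L.X (0 + 1) →ₗ[R] D × L.X 0 := LinearMap.prod t2 (-(L.d 0)) with hψdef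
  set W := LinearMap.range ψm with hWdef
  set ρ0 : D × L.X 0 →ₗ[R] E :=
    (i.comp π).comp (LinearMap.fst R D (L.X 0)) + h0.comp (LinearMap.snd R D (L.X 0)) with hρ0def
  have hρ0 : ∀ z : D × L.X 0, ρ0 z = i (π z.1) + h0 z.2 := fun z => rfl
  have hWker : W ≤ LinearMap.ker ρ0 := by
    rintro _ ⟨y, rfl⟩
    simp only [LinearMap.mem_ker, hρ0, hψdef, LinearMap.prod_apply, Function.prod_apply,
      LinearMap.neg_apply, map_neg]
    rw [hπt2, hia0]
    simp
  set ρ : ((D × L.X 0) ⧸ W) →ₗ[R] E := W.liftQ ρ0 hWker with hρdef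
  have hρmk : ∀ z, ρ (W.mkQ z) = ρ0 z := fun z => rfl
  have hρsurj : Function.Surjective ρ := by
    intro e
    obtain ⟨x, hx⟩ := hf0 (q e)
    have : q (e - h0 x) = 0 := by rw [map_sub, hh0', hx, sub_self]
    obtain ⟨a, ha⟩ := (hiq _).mp this
    obtain ⟨d, hd⟩ := hπ a
    refine ⟨W.mkQ (d, x), ?_⟩
    rw [hρmk, hρ0]
    simp only [hd, ha]
    simp
  set jE : Q →ₗ[R] ((D × L.X 0) ⧸ W) :=
    W.mkQ.comp ((LinearMap.inl R D (L.X 0)).comp jD) with hjEdef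
  have hjEmk : ∀ x, jE x = W.mkQ (jD x, 0) := fun x => rfl
  have hd0zero : ∀ y : L.X (0 + 1), L.d 0 y = 0 → t2 y = 0 := by
    intro y hy
    obtain ⟨z, hz⟩ := (hAc 0 y).mp hy
    rw [← hz, ht2d]
  have hjEinj : Function.Injective jE := by
    intro x x' hxx'
    have hmem : ((jD (x - x') : D), (0 : L.X 0)) ∈ W := by
      rw [← Submodule.Quotient.mk_eq_zero]
      have : jE (x - x') = 0 := by rw [map_sub, hxx', sub_self]
      rw [hjEmk] at this
      simpa [Submodule.Quotient.mk_eq_zero] using this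
    obtain ⟨y, hy⟩ := hmem
    have h2 : L.d 0 y = 0 := by
      have := congrArg Prod.snd hy
      simp only [hψdef, LinearMap.prod_apply, Function.prod_apply, LinearMap.neg_apply] at this
      exact neg_eq_zero.mp this
    have h1 : jD (x - x') = 0 := by
      have := congrArg Prod.fst hy
      simp only [hψdef, LinearMap.prod_apply, Function.prod_apply] at this
      rw [← this, hd0zero y h2]
    have := hjD (by rw [h1, map_zero] : jD (x - x') = jD 0)
    exact sub_eq_zero.mp this
  have hπt2' : ∀ y, π (t2 y) = a0 y := hπt2
  have hexE : Function.Exact jE ρ := by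
    intro w
    constructor
    · intro hw
      obtain ⟨⟨d, x0⟩, rfl⟩ := W.mkQ_surjective w
      rw [hρmk, hρ0] at hw
      have hf0x0 : f0 x0 = 0 := by
        have h5 := congrArg q hw
        simp only [map_add, map_zero] at h5
        rw [(hiq _).mpr ⟨π d, rfl⟩, hh0', zero_add] at h5
        exact h5
      have hx0 : x0 ∈ LinearMap.ker f0 := hf0x0
      rw [hker] at hx0
      obtain ⟨y, hy⟩ := hx0
      have hπd : π (d + t2 y) = 0 := by
        apply hi
        rw [map_zero, map_add, map_add, hπt2', hia0, hy, hw]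
      obtain ⟨xq, hxq⟩ := (hexD _).mp hπd
      refine ⟨xq, ?_⟩
      rw [hjEmk]
      have hsub : ((jD xq, (0 : L.X 0)) : D × L.X 0) - (d, x0) ∈ W := by
        refine ⟨y, ?_⟩
        simp only [hψdef, LinearMap.prod_apply, Function.prod_apply, LinearMap.neg_apply]
        rw [Prod.mk_sub_mk, hxq, hy]
        simp
      rw [Submodule.mkQ_apply, Submodule.mkQ_apply]
      exact (Submodule.Quotient.eq W).mpr hsub
    · rintro ⟨x, rfl⟩
      rw [hjEmk, hρmk, hρ0]
      simp [hπjD]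
  -- split the extension using LiftProp E
  obtain ⟨σ, hσ⟩ := hE Q ((D × L.X 0) ⧸ W) E jE ρ LinearMap.id hQ hjEinj hρsurj hexE
  have hσ' : ∀ e, ρ (σ e) = e := fun e => LinearMap.congr_fun hσ e
  set dE : D →ₗ[R] ((D × L.X 0) ⧸ W) := W.mkQ.comp (LinearMap.inl R D (L.X 0)) with hdEdef
  have hdEmk : ∀ d, dE d = W.mkQ (d, 0) := fun d => rfl
  have hdEinj : Function.Injective dE := by
    intro d d' hdd'
    have hmem : ((d - d' : D), (0 : L.X 0)) ∈ W := by
      rw [← Submodule.Quotient.mk_eq_zero]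
      have h6 : dE (d - d') = 0 := by rw [map_sub, hdd', sub_self]
      rw [hdEmk] at h6
      simpa [Submodule.Quotient.mk_eq_zero] using h6
    obtain ⟨y, hy⟩ := hmem
    have h2 : L.d 0 y = 0 := by
      have h7 := congrArg Prod.snd hy
      simp only [hψdef, LinearMap.prod_apply, Function.prod_apply, LinearMap.neg_apply] at h7
      exact neg_eq_zero.mp h7
    have h1 : d - d' = 0 := by
      have h8 := congrArg Prod.fst hy
      simp only [hψdef, LinearMap.prod_apply, Function.prod_apply] at h8
      rw [← h8, hd0zero y h2]
    exact sub_eq_zero.mp h1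
  -- the induced map to G kills σ ∘ i, so σ ∘ i lands in the image of D
  have hWkerG : W ≤ LinearMap.ker (f0.comp (LinearMap.snd R D (L.X 0))) := by
    rintro _ ⟨y, rfl⟩
    simp only [LinearMap.mem_ker, LinearMap.comp_apply, hψdef,
      LinearMap.prod_apply, Function.prod_apply, LinearMap.snd_apply, LinearMap.neg_apply, map_neg]
    have hm : L.d 0 y ∈ LinearMap.ker f0 := by rw [hker]; exact ⟨y, rfl⟩
    have : f0 (L.d 0 y) = 0 := hm
    rw [this, neg_zero]
  set Ghat : ((D × L.X 0) ⧸ W) →ₗ[R] G := W.liftQ _ hWkerG with hGhatdef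
  have hGhatmk : ∀ z : D × L.X 0, Ghat (W.mkQ z) = f0 z.2 := fun z => rfl
  have hGhatρ : ∀ w, Ghat w = q (ρ w) := by
    intro w
    obtain ⟨⟨d, x0⟩, rfl⟩ := W.mkQ_surjective w
    rw [hGhatmk, hρmk, hρ0, map_add, (hiq _).mpr ⟨π d, rfl⟩, hh0', zero_add]
  have hmemD : ∀ a : A, (σ.comp i) a ∈ LinearMap.range dE := by
    intro a
    have h9 : Ghat (σ (i a)) = 0 := by
      rw [hGhatρ, hσ', (hiq _).mpr ⟨a, rfl⟩]
    obtain ⟨⟨d, x0⟩, hrep⟩ := W.mkQ_surjective (σ (i a))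
    rw [← hrep, hGhatmk] at h9
    have hx0 : x0 ∈ LinearMap.ker f0 := h9
    rw [hker] at hx0
    obtain ⟨y, hy⟩ := hx0
    refine ⟨d + t2 y, ?_⟩
    show dE (d + t2 y) = σ (i a)
    rw [hdEmk, ← hrep, Submodule.mkQ_apply, Submodule.mkQ_apply]
    refine (Submodule.Quotient.eq W).mpr ⟨y, ?_⟩
    simp only [hψdef, LinearMap.prod_apply, Function.prod_apply, LinearMap.neg_apply]
    rw [Prod.mk_sub_mk, hy]
    simp
  set s := factorThru dE hdEinj (σ.comp i) hmemD with hsdef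
  have hs : ∀ a, dE (s a) = σ (i a) := fun a => factorThru_apply dE hdEinj _ hmemD a
  refine ⟨s, ?_⟩
  apply LinearMap.ext; intro a
  apply hi
  have h10 : ρ (dE (s a)) = i (π (s a)) := by
    rw [hdEmk, hρmk, hρ0]
    simp
  rw [LinearMap.comp_apply, LinearMap.id_apply, ← h10, hs, hσ']

end Transfer
section Transfer2

variable {R : Type u} [CommRing R]

/-- Transfer of the lifting property along an extension with Gorenstein
projective quotient: if `0 → A → E → G → 0` with `G` Gorenstein projective
and `E` has the lifting property, so does `A`. -/
theorem liftProp_transfer {A E G : Type u}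
    [AddCommGroup A] [Module R A] [AddCommGroup E] [Module R E]
    [AddCommGroup G] [Module R G]
    (i : A →ₗ[R] E) (q : E →ₗ[R] G) (hi : Function.Injective i)
    (hq : Function.Surjective q) (hiq : Function.Exact i q)
    (hG : IsGorensteinProjective R G) (hE : LiftProp R E) : LiftProp R A := by
  intro Q B N _ _ _ _ _ _ j0 p0 u0 hQ hj0 hp0 hex0
  -- pullback of p0 along u0
  set D := LinearMap.ker ((p0.comp (LinearMap.fst R B A)) - (u0.comp (LinearMap.snd R B A)))
    with hDdef
  have hmemD : ∀ z : B × A, z ∈ D ↔ p0 z.1 = u0 z.2 := by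
    intro z
    rw [hDdef]
    simp only [LinearMap.mem_ker, LinearMap.sub_apply, LinearMap.comp_apply,
      LinearMap.fst_apply, LinearMap.snd_apply]
    exact sub_eq_zero
  set π : D →ₗ[R] A := (LinearMap.snd R B A).comp D.subtype with hπdef
  have hπap : ∀ z : D, π z = (z : B × A).2 := fun z => rfl
  have hπsurj : Function.Surjective π := by
    intro a
    obtain ⟨b, hb⟩ := hp0 (u0 a)
    exact ⟨⟨(b, a), (hmemD _).mpr hb⟩, rfl⟩
  have hp0j0 : ∀ x, p0 (j0 x) = 0 := fun x => (hex0 _).mpr ⟨x, rfl⟩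
  set jD : Q →ₗ[R] D := LinearMap.codRestrict D ((LinearMap.inl R B A).comp j0)
    (fun x => (hmemD _).mpr (by simp [hp0j0])) with hjDdef
  have hjDap : ∀ x, ((jD x : B × A)) = (j0 x, 0) := fun x => rfl
  have hjDinj : Function.Injective jD := by
    intro x x' hxx'
    apply hj0
    have := congrArg (fun z : D => (z : B × A).1) hxx'
    simpa [hjDap] using this
  have hexD : Function.Exact jD π := by
    intro z
    constructor
    · intro hz
      have hz2 : (z : B × A).2 = 0 := hz
      have hz1 : p0 (z : B × A).1 = 0 := by
        have := (hmemD _).mp z.2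
        rw [hz2, map_zero] at this
        exact this
      obtain ⟨x, hx⟩ := (hex0 _).mp hz1
      refine ⟨x, ?_⟩
      apply Subtype.ext
      rw [hjDap]
      exact Prod.ext hx hz2.symm
    · rintro ⟨x, rfl⟩
      rw [hπap, hjDap]
  obtain ⟨s, hs⟩ := section_transfer i q hi hq hiq hG hE jD π hQ hjDinj hπsurj hexD
  have hs' : ∀ a, π (s a) = a := fun a => LinearMap.congr_fun hs a
  refine ⟨((LinearMap.fst R B A).comp D.subtype).comp s, ?_⟩
  apply LinearMap.ext; intro a
  have hmem := (hmemD _).mp (s a).2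
  simp only [LinearMap.comp_apply, LinearMap.fst_apply, Submodule.coe_subtype]
  rw [hmem]
  have : ((s a : B × A)).2 = π (s a) := rfl
  rw [this, hs']

end Transfer2
/-- `AEV R n M` : all `Ext^{≥1}(S, proj)` vanish for all syzygies `S` of `M`
up to depth `n`. -/
def AEV (R : Type u) [CommRing R] :
    ℕ → ∀ (M : Type u) [AddCommGroup M] [Module R M], Prop
  | 0, M, _, _ => LiftProp R M
  | n + 1, M, _, _ => ∀ (F : Type u) (_ : AddCommGroup F) (_ : Module R F)
      (f : F →ₗ[R] M), Module.Projective R F → Function.Surjective f →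
      AEV R n (LinearMap.ker f)

section AEVLemmas

variable {R : Type u} [CommRing R]

theorem aev_congr : ∀ (n : ℕ) {M N : Type u} [AddCommGroup M] [Module R M]
    [AddCommGroup N] [Module R N], (M ≃ₗ[R] N) → AEV R n M → AEV R n N
  | 0, M, N, _, _, _, _, e, h => liftProp_of_equiv e h
  | n + 1, M, N, _, _, _, _, e, h => by
    intro F _ _ f hFp hfs
    have hker : LinearMap.ker (e.symm.toLinearMap.comp f) = LinearMap.ker f := by
      rw [LinearMap.ker_comp, LinearEquiv.ker, Submodule.comap_bot]
    have h2 := h F _ _ (e.symm.toLinearMap.comp f) hFp (e.symm.surjective.comp hfs)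
    rwa [hker] at h2

theorem aev_of_projective : ∀ (n : ℕ) (M : Type u) [AddCommGroup M] [Module R M],
    Module.Projective R M → AEV R n M
  | 0, M, _, _, hM => liftProp_of_projective hM
  | n + 1, M, _, _, hM => by
    intro F _ _ f hFp hfs
    haveI := hM
    obtain ⟨σ, hσ⟩ := Module.projective_lifting_property f LinearMap.id hfs
    exact aev_of_projective n _ (ker_proj_of_section hFp f σ hσ)

/-- Horseshoe-type construction: a projective cover of `A` extends to a
projective cover of `E`, inducing an exact sequence of syzygies with
Gorenstein projective cokernel. -/
theorem horseshoe {A E G F : Type u}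
    [AddCommGroup A] [Module R A] [AddCommGroup E] [Module R E]
    [AddCommGroup G] [Module R G] [AddCommGroup F] [Module R F]
    (i : A →ₗ[R] E) (q : E →ₗ[R] G) (hi : Function.Injective i)
    (hq : Function.Surjective q) (hiq : Function.Exact i q)
    (hG : IsGorensteinProjective R G)
    (f : F →ₗ[R] A) (hF : Module.Projective R F) (hf : Function.Surjective f) :
    ∃ (FE KG : Type u) (_ : AddCommGroup FE) (_ : Module R FE)
      (_ : AddCommGroup KG) (_ : Module R KG) (fE : FE →ₗ[R] E),
      Module.Projective R FE ∧ Function.Surjective fE ∧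
      IsGorensteinProjective R KG ∧
      ∃ (α : LinearMap.ker f →ₗ[R] LinearMap.ker fE)
        (β : LinearMap.ker fE →ₗ[R] KG),
        Function.Injective α ∧ Function.Surjective β ∧ Function.Exact α β := by
  obtain ⟨L, hAc, hP, hHA, f0, hf0, hker⟩ := hG
  have hKG : IsGorensteinProjective R (LinearMap.ker f0) :=
    gp_ker_of_isCoker L hAc hP hHA f0 hker
  haveI := hP 0
  haveI := hF
  obtain ⟨h0, hh0⟩ := Module.projective_lifting_property q f0 hq
  have hh0' : ∀ x, q (h0 x) = f0 x := fun x => LinearMap.congr_fun hh0 x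
  set fE : F × L.X 0 →ₗ[R] E :=
    (i.comp f).comp (LinearMap.fst R F (L.X 0)) + h0.comp (LinearMap.snd R F (L.X 0))
    with hfEdef
  have hfEap : ∀ z : F × L.X 0, fE z = i (f z.1) + h0 z.2 := fun z => rfl
  have hfEs : Function.Surjective fE := by
    intro e
    obtain ⟨x, hx⟩ := hf0 (q e)
    have : q (e - h0 x) = 0 := by rw [map_sub, hh0', hx, sub_self]
    obtain ⟨a, ha⟩ := (hiq _).mp this
    obtain ⟨w, hw⟩ := hf a
    refine ⟨(w, x), ?_⟩
    rw [hfEap]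
    simp only [hw, ha]
    simp
  have hqi : ∀ a, q (i a) = 0 := fun a => (hiq _).mpr ⟨a, rfl⟩
  -- the connecting maps on kernels
  have hαmem : ∀ z : LinearMap.ker f,
      ((LinearMap.inl R F (L.X 0)).comp (LinearMap.ker f).subtype) z ∈ LinearMap.ker fE := by
    intro z
    have hz : f (z : F) = 0 := z.2
    simp only [LinearMap.mem_ker, LinearMap.comp_apply, Submodule.coe_subtype,
      LinearMap.coe_inl]
    rw [hfEap]
    simp [hz]
  set α := LinearMap.codRestrict (LinearMap.ker fE) _ hαmem with hαdef
  have hβmem : ∀ z : LinearMap.ker fE,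
      ((LinearMap.snd R F (L.X 0)).comp (LinearMap.ker fE).subtype) z
        ∈ LinearMap.ker f0 := by
    intro z
    have hz : fE (z : F × L.X 0) = 0 := z.2
    rw [hfEap] at hz
    have h5 := congrArg q hz
    simp only [map_add, map_zero, hqi, hh0', zero_add] at h5
    exact h5
  set β := LinearMap.codRestrict (LinearMap.ker f0) _ hβmem with hβdef
  have hαap : ∀ z : LinearMap.ker f, ((α z : F × L.X 0)) = ((z : F), 0) := fun z => rfl
  have hβap : ∀ z : LinearMap.ker fE, ((β z : L.X 0)) = ((z : F × L.X 0)).2 :=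
    fun z => rfl
  refine ⟨F × L.X 0, LinearMap.ker f0, inferInstance, inferInstance, inferInstance,
    inferInstance, fE, inferInstance, hfEs, hKG, α, β, ?_, ?_, ?_⟩
  · intro z z' hzz'
    apply Subtype.ext
    have := congrArg (fun w : LinearMap.ker fE => ((w : F × L.X 0)).1) hzz'
    simpa [hαap] using this
  · rintro ⟨x, hx⟩
    have hx' : f0 x = 0 := hx
    have : q (h0 x) = 0 := by rw [hh0', hx']
    obtain ⟨a, ha⟩ := (hiq _).mp this
    obtain ⟨w, hw⟩ := hf a
    have hmem : ((-w, x) : F × L.X 0) ∈ LinearMap.ker fE := by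
      simp only [LinearMap.mem_ker]
      rw [hfEap]
      simp [hw, ha]
    exact ⟨⟨(-w, x), hmem⟩, Subtype.ext rfl⟩
  · intro z
    constructor
    · intro hz
      have hz2 : ((z : F × L.X 0)).2 = 0 := by
        have := congrArg (fun w : LinearMap.ker f0 => (w : L.X 0)) hz
        simpa [hβap] using this
      have hz1 : f ((z : F × L.X 0)).1 = 0 := by
        apply hi
        have hzk : fE (z : F × L.X 0) = 0 := z.2
        rw [hfEap, hz2, map_zero, add_zero] at hzk
        rw [hzk, map_zero]
      refine ⟨⟨((z : F × L.X 0)).1, hz1⟩, ?_⟩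
      apply Subtype.ext
      rw [hαap]
      exact Prod.ext rfl hz2.symm
    · rintro ⟨w, rfl⟩
      apply Subtype.ext
      rw [hβap, hαap]
      simp

theorem aev_trans : ∀ (n : ℕ) {A E G : Type u}
    [AddCommGroup A] [Module R A] [AddCommGroup E] [Module R E]
    [AddCommGroup G] [Module R G]
    (i : A →ₗ[R] E) (q : E →ₗ[R] G), Function.Injective i →
    Function.Surjective q → Function.Exact i q →
    IsGorensteinProjective R G → AEV R n E → AEV R n A
  | 0, A, E, G, _, _, _, _, _, _, i, q, hi, hq, hiq, hG, hE =>
    liftProp_transfer i q hi hq hiq hG hE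
  | n + 1, A, E, G, _, _, _, _, _, _, i, q, hi, hq, hiq, hG, hE => by
    intro F _ _ f hFp hfs
    obtain ⟨FE, KG, _, _, _, _, fE, hFEp, hfEs, hKG, α, β, hα, hβ, hαβ⟩ :=
      horseshoe i q hi hq hiq hG f hFp hfs
    exact aev_trans n α β hα hβ hαβ hKG (hE FE _ _ fE hFEp hfEs)

theorem aev_of_gp : ∀ (n : ℕ) {G : Type u} [AddCommGroup G] [Module R G],
    IsGorensteinProjective R G → AEV R n G
  | 0, G, _, _, hG => liftProp_of_gp hG
  | n + 1, G, _, _, hG => by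
    intro F _ _ f hFp hfs
    exact aev_trans n (LinearMap.ker f).subtype f (Submodule.injective_subtype _)
      hfs (LinearMap.exact_subtype_ker_map f) hG (aev_of_projective n F hFp)

/-- Restricting a projective cover of `M × F` (with `F` projective) to a
projective cover of `M` with the same kernel. -/
theorem restrict_cover {M F Fc : Type u}
    [AddCommGroup M] [Module R M] [AddCommGroup F] [Module R F]
    [AddCommGroup Fc] [Module R Fc]
    (hF : Module.Projective R F) (hFc : Module.Projective R Fc)
    (f : Fc →ₗ[R] M × F) (hf : Function.Surjective f) :
    ∃ (Fc' : Type u) (_ : AddCommGroup Fc') (_ : Module R Fc')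
      (f' : Fc' →ₗ[R] M), Module.Projective R Fc' ∧ Function.Surjective f' ∧
      Nonempty ((LinearMap.ker f') ≃ₗ[R] (LinearMap.ker f)) := by
  set g := (LinearMap.snd R M F).comp f with hgdef
  have hgs : Function.Surjective g := by
    intro w
    obtain ⟨z, hz⟩ := hf (0, w)
    exact ⟨z, by rw [hgdef]; simp [hz]⟩
  haveI := hF
  obtain ⟨σ, hσ⟩ := Module.projective_lifting_property g LinearMap.id hgs
  have hFc' : Module.Projective R (LinearMap.ker g) := ker_proj_of_section hFc g σ hσ
  set f' : LinearMap.ker g →ₗ[R] M :=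
    (LinearMap.fst R M F).comp (f.comp (LinearMap.ker g).subtype) with hf'def
  have hf'ap : ∀ z : LinearMap.ker g, f' z = (f (z : Fc)).1 := fun z => rfl
  have hf's : Function.Surjective f' := by
    intro m
    obtain ⟨z, hz⟩ := hf (m, 0)
    have hzg : z ∈ LinearMap.ker g := by
      simp only [LinearMap.mem_ker, hgdef, LinearMap.comp_apply, hz]
      rfl
    exact ⟨⟨z, hzg⟩, by rw [hf'ap, hz]⟩
  refine ⟨LinearMap.ker g, inferInstance, inferInstance, f', hFc', hf's, ⟨?_⟩⟩
  -- kernel of f' is the kernel of f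
  have hm1 : ∀ z : LinearMap.ker f',
      (((LinearMap.ker g).subtype).comp (LinearMap.ker f').subtype) z
        ∈ LinearMap.ker f := by
    intro z
    have h1 : (f ((z : LinearMap.ker g) : Fc)).1 = 0 := z.2
    have h2 : (f ((z : LinearMap.ker g) : Fc)).2 = 0 := (z : LinearMap.ker g).2
    simp only [LinearMap.mem_ker, LinearMap.comp_apply, Submodule.coe_subtype]
    exact Prod.ext h1 h2
  have hm2g : ∀ z : LinearMap.ker f, ((LinearMap.ker f).subtype) z ∈ LinearMap.ker g := by
    intro z
    have hz : f (z : Fc) = 0 := z.2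
    have h6 : g ((LinearMap.ker f).subtype z) = (LinearMap.snd R M F) (f (z : Fc)) := rfl
    simp only [LinearMap.mem_ker, h6, hz, map_zero]
  have hm2 : ∀ z : LinearMap.ker f,
      (LinearMap.codRestrict (LinearMap.ker g) _ hm2g) z ∈ LinearMap.ker f' := by
    intro z
    have hz : f (z : Fc) = 0 := z.2
    have : f' ((LinearMap.codRestrict (LinearMap.ker g) _ hm2g) z) = (f (z : Fc)).1 := rfl
    simp only [LinearMap.mem_ker, this, hz]
    rfl
  refine LinearEquiv.ofLinear
    (LinearMap.codRestrict (LinearMap.ker f) _ hm1)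
    (LinearMap.codRestrict (LinearMap.ker f') _ hm2) ?_ ?_
  · apply LinearMap.ext; intro z
    apply Subtype.ext
    rfl
  · apply LinearMap.ext; intro z
    apply Subtype.ext
    apply Subtype.ext
    rfl

theorem aev_prod_proj : ∀ (n : ℕ) {M F : Type u}
    [AddCommGroup M] [Module R M] [AddCommGroup F] [Module R F],
    Module.Projective R F → AEV R n M → AEV R n (M × F)
  | 0, M, F, _, _, _, _, hF, hM => liftProp_prod hM (liftProp_of_projective hF)
  | n + 1, M, F, _, _, _, _, hF, hM => by
    intro Fc _ _ f hFcp hfs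
    obtain ⟨Fc', _, _, f', hp', hs', ⟨e⟩⟩ := restrict_cover hF hFcp f hfs
    exact aev_congr n e (hM Fc' _ _ f' hp' hs')

end AEVLemmas
/-- `HV R m M` : `Ext^{m+i}(M, proj) = 0` for all `i ≥ 1` (encoded via syzygies). -/
def HV (R : Type u) [CommRing R] :
    ℕ → ∀ (M : Type u) [AddCommGroup M] [Module R M], Prop
  | 0, M, _, _ => ∀ n, AEV R n M
  | m + 1, M, _, _ => ∀ (F : Type u) (_ : AddCommGroup F) (_ : Module R F)
      (f : F →ₗ[R] M), Module.Projective R F → Function.Surjective f →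
      HV R m (LinearMap.ker f)

section HVLemmas

variable {R : Type u} [CommRing R]

theorem hv_congr : ∀ (m : ℕ) {M N : Type u} [AddCommGroup M] [Module R M]
    [AddCommGroup N] [Module R N], (M ≃ₗ[R] N) → HV R m M → HV R m N
  | 0, M, N, _, _, _, _, e, h => fun n => aev_congr n e (h n)
  | m + 1, M, N, _, _, _, _, e, h => by
    intro F _ _ f hFp hfs
    have hker : LinearMap.ker (e.symm.toLinearMap.comp f) = LinearMap.ker f := by
      rw [LinearMap.ker_comp, LinearEquiv.ker, Submodule.comap_bot]
    have h2 := h F _ _ (e.symm.toLinearMap.comp f) hFp (e.symm.surjective.comp hfs)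
    rwa [hker] at h2

theorem hv_trans : ∀ (m : ℕ) {A E G : Type u}
    [AddCommGroup A] [Module R A] [AddCommGroup E] [Module R E]
    [AddCommGroup G] [Module R G]
    (i : A →ₗ[R] E) (q : E →ₗ[R] G), Function.Injective i →
    Function.Surjective q → Function.Exact i q →
    IsGorensteinProjective R G → HV R m E → HV R m A
  | 0, A, E, G, _, _, _, _, _, _, i, q, hi, hq, hiq, hG, hE =>
    fun n => aev_trans n i q hi hq hiq hG (hE n)
  | m + 1, A, E, G, _, _, _, _, _, _, i, q, hi, hq, hiq, hG, hE => by
    intro F _ _ f hFp hfs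
    obtain ⟨FE, KG, _, _, _, _, fE, hFEp, hfEs, hKG, α, β, hα, hβ, hαβ⟩ :=
      horseshoe i q hi hq hiq hG f hFp hfs
    exact hv_trans m α β hα hβ hαβ hKG (hE FE _ _ fE hFEp hfEs)

theorem hv_prod_proj : ∀ (m : ℕ) {M F : Type u}
    [AddCommGroup M] [Module R M] [AddCommGroup F] [Module R F],
    Module.Projective R F → HV R m M → HV R m (M × F)
  | 0, M, F, _, _, _, _, hF, hM => fun n => aev_prod_proj n hF (hM n)
  | m + 1, M, F, _, _, _, _, hF, hM => by
    intro Fc _ _ f hFcp hfs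
    obtain ⟨Fc', _, _, f', hp', hs', ⟨e⟩⟩ := restrict_cover hF hFcp f hfs
    exact hv_congr m e (hM Fc' _ _ f' hp' hs')

/-- A module of Gorenstein projective dimension at most `m` has
`Ext^{m+i}(M, proj) = 0` for `i ≥ 1`. -/
theorem hv_of_gprojdimle : ∀ (m : ℕ) (M : Type u) [AddCommGroup M] [Module R M],
    GProjDimLe R m M → HV R m M
  | 0, M, _, _, hM => fun n => aev_of_gp n hM
  | m + 1, M, _, _, hM => by
    obtain ⟨G, _, _, g, hGgp, hgs, hKg⟩ := hM
    have hK' : HV R m (LinearMap.ker g) := hv_of_gprojdimle m _ hKg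
    intro F _ _ f hFp hfs
    -- the pullback of f and g
    set P := LinearMap.ker ((f.comp (LinearMap.fst R F G)) -
      (g.comp (LinearMap.snd R F G))) with hPdef
    have hmemP : ∀ z : F × G, z ∈ P ↔ f z.1 = g z.2 := by
      intro z
      rw [hPdef]
      simp only [LinearMap.mem_ker, LinearMap.sub_apply, LinearMap.comp_apply,
        LinearMap.fst_apply, LinearMap.snd_apply]
      exact sub_eq_zero
    set πF : P →ₗ[R] F := (LinearMap.fst R F G).comp P.subtype with hπFdef
    set πG : P →ₗ[R] G := (LinearMap.snd R F G).comp P.subtype with hπGdef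
    have hπFap : ∀ z : P, πF z = (z : F × G).1 := fun z => rfl
    have hπGap : ∀ z : P, πG z = (z : F × G).2 := fun z => rfl
    have hπFs : Function.Surjective πF := by
      intro w
      obtain ⟨y, hy⟩ := hgs (f w)
      exact ⟨⟨(w, y), (hmemP _).mpr hy.symm⟩, rfl⟩
    have hπGs : Function.Surjective πG := by
      intro y
      obtain ⟨w, hw⟩ := hfs (g y)
      exact ⟨⟨(w, y), (hmemP _).mpr hw⟩, rfl⟩
    haveI := hFp
    obtain ⟨σ, hσ⟩ := Module.projective_lifting_property πF LinearMap.id hπFs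
    have e1 := splitEquiv πF σ hσ
    -- ker πF ≃ ker g
    have hm2P : ∀ z : LinearMap.ker g,
        ((LinearMap.inr R F G).comp (LinearMap.ker g).subtype) z ∈ P := by
      intro z
      refine (hmemP _).mpr ?_
      have hz : g (z : G) = 0 := z.2
      simp [hz]
    have hm2F : ∀ z : LinearMap.ker g,
        (LinearMap.codRestrict P _ hm2P) z ∈ LinearMap.ker πF := by
      intro z
      have : πF ((LinearMap.codRestrict P _ hm2P) z) = 0 := rfl
      exact this
    have hm1g : ∀ z : LinearMap.ker πF,
        ((LinearMap.snd R F G).comp (P.subtype.comp (LinearMap.ker πF).subtype)) z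
          ∈ LinearMap.ker g := by
      intro z
      have hz1 : ((z : P) : F × G).1 = 0 := z.2
      have hz : f (((z : P) : F × G)).1 = g (((z : P) : F × G)).2 :=
        (hmemP _).mp (z : P).2
      rw [hz1, map_zero] at hz
      exact hz.symm
    have e2 : (↥(LinearMap.ker πF)) ≃ₗ[R] (↥(LinearMap.ker g)) := by
      refine LinearEquiv.ofLinear
        (LinearMap.codRestrict (LinearMap.ker g) _ hm1g)
        (LinearMap.codRestrict (LinearMap.ker πF) _ hm2F) ?_ ?_
      · apply LinearMap.ext; intro z
        apply Subtype.ext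
        rfl
      · apply LinearMap.ext; intro z
        apply Subtype.ext
        apply Subtype.ext
        have hz1 : ((z : P) : F × G).1 = 0 := z.2
        exact Prod.ext hz1.symm rfl
    -- HV m P
    have h3a : HV R m (↥(LinearMap.ker πF)) := hv_congr m e2.symm hK'
    have h3b : HV R m ((↥(LinearMap.ker πF)) × F) := hv_prod_proj m hFp h3a
    have h3 : HV R m ↥P := hv_congr m e1.symm h3b
    -- 0 → ker πG → P → G → 0 with G Gorenstein projective
    have h4 : HV R m (LinearMap.ker πG) :=
      hv_trans m (LinearMap.ker πG).subtype πG (Submodule.injective_subtype _)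
        hπGs (LinearMap.exact_subtype_ker_map πG) hGgp h3
    -- ker πG ≃ ker f
    have hm3P : ∀ z : LinearMap.ker f,
        ((LinearMap.inl R F G).comp (LinearMap.ker f).subtype) z ∈ P := by
      intro z
      refine (hmemP _).mpr ?_
      have hz : f (z : F) = 0 := z.2
      simp [hz]
    have hm3G : ∀ z : LinearMap.ker f,
        (LinearMap.codRestrict P _ hm3P) z ∈ LinearMap.ker πG := by
      intro z
      have : πG ((LinearMap.codRestrict P _ hm3P) z) = 0 := rfl
      exact this
    have hm4f : ∀ z : LinearMap.ker πG,
        ((LinearMap.fst R F G).comp (P.subtype.comp (LinearMap.ker πG).subtype)) z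
          ∈ LinearMap.ker f := by
      intro z
      have hz2 : ((z : P) : F × G).2 = 0 := z.2
      have hz : f (((z : P) : F × G)).1 = g (((z : P) : F × G)).2 :=
        (hmemP _).mp (z : P).2
      rw [hz2, map_zero] at hz
      exact hz
    have e3 : (↥(LinearMap.ker πG)) ≃ₗ[R] (↥(LinearMap.ker f)) := by
      refine LinearEquiv.ofLinear
        (LinearMap.codRestrict (LinearMap.ker f) _ hm4f)
        (LinearMap.codRestrict (LinearMap.ker πG) _ hm3G) ?_ ?_
      · apply LinearMap.ext; intro z
        apply Subtype.ext
        rfl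
      · apply LinearMap.ext; intro z
        apply Subtype.ext
        apply Subtype.ext
        have hz2 : ((z : P) : F × G).2 = 0 := z.2
        exact Prod.ext rfl hz2.symm
    exact hv_congr m e3 h4

end HVLemmas
section PDLemmas

variable {R : Type u} [CommRing R]

theorem pd_congr : ∀ (n : ℕ) {M N : Type u} [AddCommGroup M] [Module R M]
    [AddCommGroup N] [Module R N], (M ≃ₗ[R] N) → ProjDimLe R n M → ProjDimLe R n N
  | 0, M, N, _, _, _, _, e, h => proj_of_equiv h e
  | n + 1, M, N, _, _, _, _, e, h => by
    obtain ⟨P, _, _, f, hPp, hfs, hK⟩ := h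
    refine ⟨P, _, _, e.toLinearMap.comp f, hPp, e.surjective.comp hfs, ?_⟩
    have hker : LinearMap.ker (e.toLinearMap.comp f) = LinearMap.ker f := by
      rw [LinearMap.ker_comp, LinearEquiv.ker, Submodule.comap_bot]
    rw [hker]
    exact hK

theorem pd_succ : ∀ (n : ℕ) {M : Type u} [AddCommGroup M] [Module R M],
    ProjDimLe R n M → ProjDimLe R (n + 1) M
  | 0, M, _, _, h => by
    refine ⟨M, _, _, LinearMap.id, h, Function.surjective_id, ?_⟩
    show Module.Projective R (LinearMap.ker (LinearMap.id : M →ₗ[R] M))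
    rw [LinearMap.ker_id]
    exact proj_of_subsingleton
  | n + 1, M, _, _, h => by
    obtain ⟨P, _, _, f, hPp, hfs, hK⟩ := h
    exact ⟨P, _, _, f, hPp, hfs, pd_succ n hK⟩

theorem pd_of_le {m n : ℕ} {M : Type u} [AddCommGroup M] [Module R M]
    (hmn : m ≤ n) (h : ProjDimLe R m M) : ProjDimLe R n M := by
  obtain ⟨k, rfl⟩ := Nat.exists_eq_add_of_le hmn
  clear hmn
  induction k with
  | zero => exact h
  | succ k ih => exact pd_succ _ ih

/-- kernel of a product map. -/
noncomputable def kerProdMapEquiv {M N M' N' : Type u}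
    [AddCommGroup M] [Module R M] [AddCommGroup N] [Module R N]
    [AddCommGroup M'] [Module R M'] [AddCommGroup N'] [Module R N']
    (p : M →ₗ[R] M') (q : N →ₗ[R] N') :
    (↥(LinearMap.ker (p.prodMap q))) ≃ₗ[R] (↥(LinearMap.ker p)) × (↥(LinearMap.ker q)) := by
  have hmem : ∀ z : M × N, z ∈ LinearMap.ker (p.prodMap q) ↔ p z.1 = 0 ∧ q z.2 = 0 := by
    intro z
    rw [LinearMap.mem_ker, LinearMap.prodMap_apply, Prod.mk_eq_zero]
  have hm1 : ∀ z : LinearMap.ker (p.prodMap q),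
      ((LinearMap.fst R M N).comp (LinearMap.ker (p.prodMap q)).subtype) z
        ∈ LinearMap.ker p := fun z => ((hmem _).mp z.2).1
  have hm2 : ∀ z : LinearMap.ker (p.prodMap q),
      ((LinearMap.snd R M N).comp (LinearMap.ker (p.prodMap q)).subtype) z
        ∈ LinearMap.ker q := fun z => ((hmem _).mp z.2).2
  have hm3 : ∀ z : (↥(LinearMap.ker p)) × (↥(LinearMap.ker q)),
      (((LinearMap.ker p).subtype).prodMap ((LinearMap.ker q).subtype)) z
        ∈ LinearMap.ker (p.prodMap q) := by
    intro z
    refine (hmem _).mpr ⟨?_, ?_⟩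
    · exact z.1.2
    · exact z.2.2
  refine LinearEquiv.ofLinear
    (LinearMap.prod (LinearMap.codRestrict (LinearMap.ker p) _ hm1)
      (LinearMap.codRestrict (LinearMap.ker q) _ hm2))
    ((LinearMap.codRestrict (LinearMap.ker (p.prodMap q)) _ hm3)) ?_ ?_
  · apply LinearMap.ext; rintro ⟨a, b⟩
    refine Prod.ext ?_ ?_
    · apply Subtype.ext; rfl
    · apply Subtype.ext; rfl
  · apply LinearMap.ext; intro z
    apply Subtype.ext
    rfl

theorem pd_prod_proj : ∀ (n : ℕ) {M F : Type u}
    [AddCommGroup M] [Module R M] [AddCommGroup F] [Module R F],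
    Module.Projective R F → ProjDimLe R n M → ProjDimLe R n (M × F)
  | 0, M, F, _, _, _, _, hF, hM => by
    haveI := hF
    haveI : Module.Projective R M := hM
    show Module.Projective R (M × F)
    infer_instance
  | n + 1, M, F, _, _, _, _, hF, hM => by
    obtain ⟨P, _, _, p, hPp, hps, hK⟩ := hM
    haveI := hF; haveI := hPp
    refine ⟨P × F, _, _, p.prodMap LinearMap.id, inferInstance, ?_, ?_⟩
    · rintro ⟨m, w⟩
      obtain ⟨x, hx⟩ := hps m
      exact ⟨(x, w), by rw [LinearMap.prodMap_apply, hx]; rfl⟩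
    · have e := kerProdMapEquiv p (LinearMap.id (R := R) (M := F))
      have e2 : (↥(LinearMap.ker (LinearMap.id (R := R) (M := F)))) ≃ₗ[R]
          (↥(⊥ : Submodule R F)) := by
        rw [LinearMap.ker_id]
      have hbot : ProjDimLe R n (↥(LinearMap.ker p) × ↥(LinearMap.ker
          (LinearMap.id (R := R) (M := F)))) := by
        refine pd_prod_proj n ?_ hK
        exact proj_of_equiv proj_of_subsingleton (e2.symm)
      exact pd_congr n e.symm hbot

/-- Schanuel's lemma for two projective covers. -/
theorem schanuel {M F Q : Type u} [AddCommGroup M] [Module R M]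
    [AddCommGroup F] [Module R F] [AddCommGroup Q] [Module R Q]
    (f : F →ₗ[R] M) (g : Q →ₗ[R] M) (hF : Module.Projective R F)
    (hQ : Module.Projective R Q) (hfs : Function.Surjective f)
    (hgs : Function.Surjective g) :
    Nonempty (((↥(LinearMap.ker f)) × Q) ≃ₗ[R] ((↥(LinearMap.ker g)) × F)) := by
  set P := LinearMap.ker ((f.comp (LinearMap.fst R F Q)) -
    (g.comp (LinearMap.snd R F Q))) with hPdef
  have hmemP : ∀ z : F × Q, z ∈ P ↔ f z.1 = g z.2 := by
    intro z
    rw [hPdef]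
    simp only [LinearMap.mem_ker, LinearMap.sub_apply, LinearMap.comp_apply,
      LinearMap.fst_apply, LinearMap.snd_apply]
    exact sub_eq_zero
  set πF : P →ₗ[R] F := (LinearMap.fst R F Q).comp P.subtype with hπFdef
  set πQ : P →ₗ[R] Q := (LinearMap.snd R F Q).comp P.subtype with hπQdef
  have hπFs : Function.Surjective πF := by
    intro w
    obtain ⟨y, hy⟩ := hgs (f w)
    exact ⟨⟨(w, y), (hmemP _).mpr hy.symm⟩, rfl⟩
  have hπQs : Function.Surjective πQ := by
    intro y
    obtain ⟨w, hw⟩ := hfs (g y)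
    exact ⟨⟨(w, y), (hmemP _).mpr hw⟩, rfl⟩
  haveI := hF; haveI := hQ
  obtain ⟨σF, hσF⟩ := Module.projective_lifting_property πF LinearMap.id hπFs
  obtain ⟨σQ, hσQ⟩ := Module.projective_lifting_property πQ LinearMap.id hπQs
  have e1 := splitEquiv πF σF hσF
  have e2 := splitEquiv πQ σQ hσQ
  -- ker πF ≃ ker g
  have hm2P : ∀ z : LinearMap.ker g,
      ((LinearMap.inr R F Q).comp (LinearMap.ker g).subtype) z ∈ P := by
    intro z
    refine (hmemP _).mpr ?_
    have hz : g (z : Q) = 0 := z.2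
    simp [hz]
  have hm2F : ∀ z : LinearMap.ker g,
      (LinearMap.codRestrict P _ hm2P) z ∈ LinearMap.ker πF := fun z => rfl
  have hm1g : ∀ z : LinearMap.ker πF,
      ((LinearMap.snd R F Q).comp (P.subtype.comp (LinearMap.ker πF).subtype)) z
        ∈ LinearMap.ker g := by
    intro z
    have hz1 : ((z : P) : F × Q).1 = 0 := z.2
    have hz : f (((z : P) : F × Q)).1 = g (((z : P) : F × Q)).2 :=
      (hmemP _).mp (z : P).2
    rw [hz1, map_zero] at hz
    exact hz.symm
  have eF : (↥(LinearMap.ker πF)) ≃ₗ[R] (↥(LinearMap.ker g)) := by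
    refine LinearEquiv.ofLinear
      (LinearMap.codRestrict (LinearMap.ker g) _ hm1g)
      (LinearMap.codRestrict (LinearMap.ker πF) _ hm2F) ?_ ?_
    · apply LinearMap.ext; intro z
      apply Subtype.ext; rfl
    · apply LinearMap.ext; intro z
      apply Subtype.ext
      apply Subtype.ext
      have hz1 : ((z : P) : F × Q).1 = 0 := z.2
      exact Prod.ext hz1.symm rfl
  -- ker πQ ≃ ker f
  have hm3P : ∀ z : LinearMap.ker f,
      ((LinearMap.inl R F Q).comp (LinearMap.ker f).subtype) z ∈ P := by
    intro z
    refine (hmemP _).mpr ?_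
    have hz : f (z : F) = 0 := z.2
    simp [hz]
  have hm3Q : ∀ z : LinearMap.ker f,
      (LinearMap.codRestrict P _ hm3P) z ∈ LinearMap.ker πQ := fun z => rfl
  have hm4f : ∀ z : LinearMap.ker πQ,
      ((LinearMap.fst R F Q).comp (P.subtype.comp (LinearMap.ker πQ).subtype)) z
        ∈ LinearMap.ker f := by
    intro z
    have hz2 : ((z : P) : F × Q).2 = 0 := z.2
    have hz : f (((z : P) : F × Q)).1 = g (((z : P) : F × Q)).2 :=
      (hmemP _).mp (z : P).2
    rw [hz2, map_zero] at hz
    exact hz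
  have eQ : (↥(LinearMap.ker πQ)) ≃ₗ[R] (↥(LinearMap.ker f)) := by
    refine LinearEquiv.ofLinear
      (LinearMap.codRestrict (LinearMap.ker f) _ hm4f)
      (LinearMap.codRestrict (LinearMap.ker πQ) _ hm3Q) ?_ ?_
    · apply LinearMap.ext; intro z
      apply Subtype.ext; rfl
    · apply LinearMap.ext; intro z
      apply Subtype.ext
      apply Subtype.ext
      have hz2 : ((z : P) : F × Q).2 = 0 := z.2
      exact Prod.ext rfl hz2.symm
  exact ⟨(eQ.symm.prodCongr (LinearEquiv.refl R Q)).trans (e2.symm.trans (e1.trans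
    (eF.prodCongr (LinearEquiv.refl R F))))⟩

theorem pd_summand : ∀ (n : ℕ) {M B : Type u}
    [AddCommGroup M] [Module R M] [AddCommGroup B] [Module R B],
    ProjDimLe R n (M × B) → ProjDimLe R n M
  | 0, M, B, _, _, _, _, h => by
    refine proj_of_retract h (LinearMap.inl R M B) (LinearMap.fst R M B) ?_
    apply LinearMap.ext; intro x
    simp
  | n + 1, M, B, _, _, _, _, h => by
    obtain ⟨Q, _, _, g, hQp, hgs, hKg⟩ := h
    set fM := Finsupp.linearCombination R (id : M → M) with hfMdef
    set fB := Finsupp.linearCombination R (id : B → B) with hfBdef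
    have hfMs : Function.Surjective fM := Finsupp.linearCombination_id_surjective R M
    have hfBs : Function.Surjective fB := Finsupp.linearCombination_id_surjective R B
    have hfs : Function.Surjective (fM.prodMap fB) := by
      rintro ⟨m, b⟩
      obtain ⟨x, hx⟩ := hfMs m
      obtain ⟨y, hy⟩ := hfBs b
      exact ⟨(x, y), by rw [LinearMap.prodMap_apply, hx, hy]⟩
    obtain ⟨eS⟩ := schanuel (fM.prodMap fB) g inferInstance hQp hfs hgs
    have h1 : ProjDimLe R n ((↥(LinearMap.ker g)) × ((M →₀ R) × (B →₀ R))) :=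
      pd_prod_proj n inferInstance hKg
    have h2 : ProjDimLe R n ((↥(LinearMap.ker (fM.prodMap fB))) × Q) :=
      pd_congr n eS.symm h1
    have e2 := kerProdMapEquiv fM fB
    have h3 : ProjDimLe R n (((↥(LinearMap.ker fM)) × (↥(LinearMap.ker fB))) × Q) :=
      pd_congr n (e2.prodCongr (LinearEquiv.refl R Q)) h2
    have h4 : ProjDimLe R n ((↥(LinearMap.ker fM)) × ((↥(LinearMap.ker fB)) × Q)) :=
      pd_congr n (LinearEquiv.prodAssoc R _ _ _) h3
    exact ⟨M →₀ R, _, _, fM, inferInstance, hfMs, pd_summand n h4⟩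

/-- Cover independence for projective dimension. -/
theorem pd_cover (n : ℕ) {M F : Type u} [AddCommGroup M] [Module R M]
    [AddCommGroup F] [Module R F] (h : ProjDimLe R (n + 1) M)
    (f : F →ₗ[R] M) (hFp : Module.Projective R F) (hfs : Function.Surjective f) :
    ProjDimLe R n (LinearMap.ker f) := by
  obtain ⟨Q, _, _, g, hQp, hgs, hKg⟩ := h
  obtain ⟨eS⟩ := schanuel f g hFp hQp hfs hgs
  have h1 : ProjDimLe R n ((↥(LinearMap.ker g)) × F) := pd_prod_proj n hFp hKg
  have h2 : ProjDimLe R n ((↥(LinearMap.ker f)) × Q) := pd_congr n eS.symm h1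
  exact pd_summand n h2

end PDLemmas
section Final

variable {R : Type u} [CommRing R]

theorem proj_of_aev_pd : ∀ (n : ℕ) (M : Type u) [AddCommGroup M] [Module R M],
    (∀ n', AEV R n' M) → ProjDimLe R n M → Module.Projective R M
  | 0, M, _, _, _, h => h
  | n + 1, M, _, _, hAEV, h => by
    set f := Finsupp.linearCombination R (id : M → M) with hfdef
    have hfs : Function.Surjective f := Finsupp.linearCombination_id_surjective R M
    have hKaev : ∀ n', AEV R n' (LinearMap.ker f) :=
      fun n' => hAEV (n' + 1) (M →₀ R) _ _ f inferInstance hfs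
    have hKpd : ProjDimLe R n (LinearMap.ker f) := pd_cover n h f inferInstance hfs
    have hKproj := proj_of_aev_pd n _ hKaev hKpd
    obtain ⟨s, hs⟩ := LiftProp.section (hAEV 0) f hfs hKproj
    exact proj_of_retract inferInstance s f hs

theorem pd_of_hv_pd : ∀ (m : ℕ) (M : Type u) [AddCommGroup M] [Module R M],
    HV R m M → (∃ n, ProjDimLe R n M) → ProjDimLe R m M
  | 0, M, _, _, hHV, ⟨n, hn⟩ => proj_of_aev_pd n M hHV hn
  | m + 1, M, _, _, hHV, ⟨n, hn⟩ => by
    set f := Finsupp.linearCombination R (id : M → M) with hfdef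
    have hfs : Function.Surjective f := Finsupp.linearCombination_id_surjective R M
    have hKhv : HV R m (LinearMap.ker f) := hHV (M →₀ R) _ _ f inferInstance hfs
    have hKpd : ∃ n', ProjDimLe R n' (LinearMap.ker f) := by
      cases n with
      | zero =>
        haveI : Module.Projective R M := hn
        obtain ⟨σ, hσ⟩ := Module.projective_lifting_property f LinearMap.id hfs
        exact ⟨0, ker_proj_of_section inferInstance f σ hσ⟩
      | succ n' => exact ⟨n', pd_cover n' hn f inferInstance hfs⟩
    exact ⟨M →₀ R, _, _, f, inferInstance, hfs, pd_of_hv_pd m _ hKhv hKpd⟩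

theorem gpd_of_pd : ∀ (m : ℕ) (M : Type u) [AddCommGroup M] [Module R M],
    ProjDimLe R m M → GProjDimLe R m M
  | 0, M, _, _, h => gp_of_projective h
  | m + 1, M, _, _, h => by
    obtain ⟨P, _, _, f, hPp, hfs, hK⟩ := h
    exact ⟨P, _, _, f, gp_of_projective hPp, hfs, gpd_of_pd m _ hK⟩

theorem pd_of_gpd {m : ℕ} {M : Type u} [AddCommGroup M] [Module R M]
    (hm : GProjDimLe R m M) (hfin : ∃ n, ProjDimLe R n M) : ProjDimLe R m M :=
  pd_of_hv_pd m M (hv_of_gprojdimle m M hm) hfin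

end Final

/-- If `M` has finite projective dimension, then its Gorenstein projective
dimension equals its projective dimension. -/
theorem gProjDim_eq_projDim_of_finite_projDim {R : Type u} [CommRing R]
    (M : Type u) [AddCommGroup M] [Module R M]
    (h : ∃ n : ℕ, ProjDimLe R n M) :
    gProjDim R M = projDim R M := by
  unfold gProjDim projDim
  congr 1
  ext k
  simp only [Set.mem_setOf_eq]
  constructor
  · rintro ⟨m, rfl, hm⟩
    exact ⟨m, rfl, pd_of_gpd hm h⟩
  · rintro ⟨m, rfl, hm⟩
    exact ⟨m, rfl, gpd_of_pd m M hm⟩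
end

section
/- Let R be a quasi-Frobenius ring (self-injective Noetherian). Then every R-module is Gorenstein projective and every R-module is Gorenstein injective. -/
universe u

open TensorProduct

section Aux
variable {R : Type u} [CommRing R] [IsNoetherianRing R]

open Submodule

theorem annihilator_annihilator (hR : Module.Injective R R) (I : Ideal R) :
    I.annihilator.annihilator ≤ I := by
  classical
  obtain ⟨s, hs⟩ : I.FG := IsNoetherian.noetherian I
  intro x hx
  set θ : R →ₗ[R] (s → R) := LinearMap.pi (fun a => LinearMap.id.smulRight (a : R)) with hθ
  have hker : LinearMap.ker θ = I.annihilator := by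
    ext r
    simp only [LinearMap.mem_ker, hθ, LinearMap.pi_apply, LinearMap.smulRight_apply,
      LinearMap.id_apply, funext_iff, Submodule.mem_annihilator]
    constructor
    · intro h y hy
      rw [← hs] at hy
      induction hy using Submodule.span_induction with
      | mem z hz => exact h ⟨z, hz⟩
      | zero => simp
      | add a b _ _ ha hb =>
        simp only [smul_eq_mul] at *; rw [mul_add, ha, hb, add_zero]
      | smul c a _ ha =>
        simp only [smul_eq_mul] at *; rw [mul_comm c a, ← mul_assoc, ha, zero_mul]
    · intro h a
      exact h a (hs ▸ Submodule.subset_span a.2)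
  set θ' : (R ⧸ I.annihilator) →ₗ[R] (s → R) :=
    Submodule.liftQ I.annihilator θ (le_of_eq hker.symm) with hθ'
  have hinj : Function.Injective θ' := by
    rw [← LinearMap.ker_eq_bot, Submodule.ker_liftQ, hker]
    simp [Submodule.ker_mkQ]
  set ψ : (R ⧸ I.annihilator) →ₗ[R] R :=
    Submodule.liftQ I.annihilator (LinearMap.toSpanSingleton R R x)
      (by intro r hr; simp only [LinearMap.mem_ker, LinearMap.toSpanSingleton_apply]
          have := Submodule.mem_annihilator.mp hx r hr
          rwa [smul_eq_mul, mul_comm, ← smul_eq_mul] at this) with hψ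
  obtain ⟨h, hh⟩ := hR.out θ' hinj ψ
  have h1 : x = h (θ 1) := by
    have := hh (Submodule.Quotient.mk 1)
    rw [hψ, hθ', Submodule.liftQ_apply, Submodule.liftQ_apply,
      LinearMap.toSpanSingleton_apply, one_smul] at this
    exact this.symm
  rw [h1]
  have hrepr : θ 1 = ∑ a : s, (Pi.single a ((a : R)) : s → R) := by
    funext b
    simp [hθ, Finset.sum_apply, Pi.single_apply]
  rw [hrepr, map_sum]
  refine Submodule.sum_mem _ (fun a _ => ?_)
  have : (Pi.single a ((a : R)) : s → R) = (a : R) • (Pi.single a (1:R) : s → R) := by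
    rw [← Pi.single_smul, smul_eq_mul, mul_one]
  rw [this, map_smul, smul_eq_mul, mul_comm]
  exact Ideal.mul_mem_left I _ (hs ▸ Submodule.subset_span a.2)


/-- Every cyclic module embeds into a finite free module. -/
theorem cyclic_embed (hR : Module.Injective R R) (I : Ideal R) :
    ∃ (n : ℕ) (f : (R ⧸ I) →ₗ[R] (Fin n → R)), Function.Injective f := by
  obtain ⟨n, b, hb⟩ :=
    Submodule.fg_iff_exists_fin_generating_family.mp (IsNoetherian.noetherian I.annihilator)
  set θ : R →ₗ[R] (Fin n → R) := LinearMap.pi (fun k => LinearMap.id.smulRight (b k)) with hθ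
  have hbmem : ∀ k, b k ∈ I.annihilator := fun k =>
    hb ▸ Submodule.subset_span (Set.mem_range_self k)
  have hIker : I ≤ LinearMap.ker θ := by
    intro r hr
    simp only [LinearMap.mem_ker, hθ, LinearMap.pi_apply, LinearMap.smulRight_apply,
      LinearMap.id_apply]
    funext k
    have := Submodule.mem_annihilator.mp (hbmem k) r hr
    rwa [smul_eq_mul, mul_comm, ← smul_eq_mul] at this
  refine ⟨n, Submodule.liftQ I θ hIker, ?_⟩
  rw [← LinearMap.ker_eq_bot, Submodule.ker_liftQ_eq_bot I θ hIker ?_]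
  intro r hr
  refine annihilator_annihilator hR I ?_
  rw [Submodule.mem_annihilator]
  intro y hy
  rw [← hb] at hy
  simp only [LinearMap.mem_ker, hθ, LinearMap.pi_apply, LinearMap.smulRight_apply,
    LinearMap.id_apply, funext_iff] at hr
  induction hy using Submodule.span_induction with
  | mem z hz => obtain ⟨k, rfl⟩ := hz; exact hr k
  | zero => simp
  | add a c _ _ ha hc => simp only [smul_eq_mul] at *; rw [mul_add, ha, hc, add_zero]
  | smul c a _ ha => simp only [smul_eq_mul] at *; rw [mul_comm c a, ← mul_assoc, ha, zero_mul]


/-- Over a Noetherian self-injective ring, free modules are injective. -/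
theorem finsupp_injective (hR : Module.Injective R R) (ι : Type u) :
    Module.Injective R (ι →₀ R) := by
  classical
  refine Module.Baer.injective (fun I g => ?_)
  obtain ⟨s, hs⟩ : I.FG := IsNoetherian.noetherian I
  have hsI : ∀ x ∈ s, x ∈ I := fun x hx => hs ▸ Submodule.subset_span hx
  set S : Finset ι := s.attach.biUnion (fun x => (g ⟨x.1, hsI x.1 x.2⟩).support) with hS
  have key : ∀ y, y ∈ Ideal.span (s : Set R) →
      ∀ hy : y ∈ I, (g ⟨y, hy⟩).support ⊆ S := by
    intro y hy
    induction hy using Submodule.span_induction with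
    | mem z hz =>
      intro hy i hi
      rw [hS]
      refine Finset.mem_biUnion.mpr ⟨⟨z, hz⟩, Finset.mem_attach _ _, ?_⟩
      convert hi using 3
    | zero =>
      intro hy i hi
      rw [show ((⟨0, hy⟩ : I)) = (0 : I) from rfl, map_zero] at hi
      simp at hi
    | add a c ha' hc' ha hc =>
      intro hy i hi
      rw [show ((⟨a + c, hy⟩ : I)) =
        (⟨a, hs ▸ ha'⟩ : I) + ⟨c, hs ▸ hc'⟩ from rfl, map_add] at hi
      rcases Finset.mem_union.mp (Finsupp.support_add hi) with h | h
      exacts [ha _ h, hc _ h]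
    | smul c a ha' ha =>
      intro hy i hi
      rw [show ((⟨c • a, hy⟩ : I)) = c • (⟨a, hs ▸ ha'⟩ : I) from rfl, map_smul] at hi
      exact ha _ (Finsupp.support_smul hi)
  have hsupp : ∀ y : I, (g y).support ⊆ S := fun y => key y.1 (hs ▸ y.2) y.2
  have hcoord : ∀ i : ι, ∃ h : R →ₗ[R] R, ∀ y : I, h y = (g y) i := by
    intro i
    by_cases hi : i ∈ S
    · obtain ⟨h, hh⟩ := hR.out (Submodule.subtype I) (fun a b hab => Subtype.ext hab)
        ((Finsupp.lapply i).comp g)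
      exact ⟨h, fun y => hh y⟩
    · refine ⟨0, fun y => ?_⟩
      simp only [LinearMap.zero_apply]
      by_contra hne
      exact hi (hsupp y (Finsupp.mem_support_iff.mpr (fun h => hne h.symm)))
  choose h hh using hcoord
  refine ⟨∑ i ∈ S, (Finsupp.lsingle i).comp (h i), fun x hx => ?_⟩
  ext i
  rw [LinearMap.sum_apply, Finsupp.finset_sum_apply]
  by_cases hi : i ∈ S
  · rw [Finset.sum_eq_single i]
    · simpa using hh i ⟨x, hx⟩
    · intro b _ hb
      simp only [LinearMap.comp_apply, Finsupp.lsingle_apply]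
      rw [Finsupp.single_apply, if_neg hb]
    · exact fun h => absurd hi h
  · rw [Finset.sum_eq_zero]
    · have : i ∉ (g ⟨x, hx⟩).support := fun h => hi (hsupp ⟨x, hx⟩ h)
      simp only [Finsupp.notMem_support_iff] at this
      rw [this]
    · intro b hb
      have hbi : b ≠ i := fun e => hi (e ▸ hb)
      simp only [LinearMap.comp_apply, Finsupp.lsingle_apply]
      rw [Finsupp.single_apply, if_neg hbi]


/-- Every module over a Noetherian self-injective ring embeds into a free module. -/
theorem embed_free (hR : Module.Injective R R) (M : Type u) [AddCommGroup M] [Module R M] :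
    ∃ (ι : Type u) (f : M →ₗ[R] (ι →₀ R)), Function.Injective f := by
  classical
  set F := ((M × ℕ) →₀ R) with hF
  set P : Set (M →ₗ.[R] F) := {f | Function.Injective f.toFun ∧
    ∀ (x : f.domain) (p : M × ℕ), p ∈ (f.toFun x).support → p.1 ∈ f.domain} with hP
  have hbot : (⊥ : M →ₗ.[R] F) ∈ P := by
    constructor
    · intro a b _
      exact Subtype.ext (((Submodule.mem_bot R).1 a.2).trans
        (((Submodule.mem_bot R).1 b.2).symm))
    · intro a p hp
      have ha : a = 0 := Subtype.ext ((Submodule.mem_bot R).1 a.2)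
      rw [ha, map_zero] at hp
      simp at hp
  -- chains are bounded
  have hchain : ∀ c ⊆ P, IsChain (· ≤ ·) c → ∀ y ∈ c, ∃ ub ∈ P, ∀ z ∈ c, z ≤ ub := by
    intro c hcP hc y hy
    have hdir : DirectedOn (· ≤ ·) c := hc.directedOn
    refine ⟨LinearPMap.sSup c hdir, ?_, fun z hz => LinearPMap.le_sSup hdir hz⟩
    have hdir' : DirectedOn (· ≤ ·) (LinearPMap.domain '' c) := by
      rintro d1 ⟨l1, h1, rfl⟩ d2 ⟨l2, h2, rfl⟩
      obtain ⟨l, hl, h1l, h2l⟩ := hdir l1 h1 l2 h2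
      exact ⟨l.domain, ⟨l, hl, rfl⟩, h1l.1, h2l.1⟩
    have hmem : ∀ x : (LinearPMap.sSup c hdir).domain,
        ∃ l, l ∈ c ∧ (x : M) ∈ l.domain := by
      intro x
      have hx : (x : M) ∈ sSup (LinearPMap.domain '' c) := x.2
      obtain ⟨d, ⟨l, hl, rfl⟩, hxd⟩ := (Submodule.mem_sSup_of_directed
        (Set.Nonempty.image _ ⟨y, hy⟩) hdir').1 hx
      exact ⟨l, hl, hxd⟩
    have happ : ∀ (l : M →ₗ.[R] F) (hl : l ∈ c) (x : (LinearPMap.sSup c hdir).domain)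
        (hx : (x : M) ∈ l.domain),
        (LinearPMap.sSup c hdir).toFun x = l.toFun ⟨x, hx⟩ := by
      intro l hl x hx
      exact LinearPMap.sSup_apply hdir hl (⟨(x : M), hx⟩ : l.domain)
    constructor
    · intro a b hab
      obtain ⟨la, hla, haa⟩ := hmem a
      obtain ⟨lb, hlb, hbb⟩ := hmem b
      obtain ⟨l, hl, hal, hbl⟩ := hdir la hla lb hlb
      have ha' : (a : M) ∈ l.domain := hal.1 haa
      have hb' : (b : M) ∈ l.domain := hbl.1 hbb
      rw [happ l hl a ha', happ l hl b hb'] at hab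
      have := (hcP hl).1 hab
      exact Subtype.ext (Subtype.mk_eq_mk.mp this)
    · intro x p hp
      obtain ⟨l, hl, hx⟩ := hmem x
      rw [happ l hl x hx] at hp
      exact (LinearPMap.le_sSup hdir hl).1 ((hcP hl).2 ⟨x, hx⟩ p hp)
  obtain ⟨m, -, hmP, hmax⟩ := zorn_le_nonempty₀ P hchain ⊥ hbot
  -- maximal element has full domain
  have hdom : m.domain = ⊤ := by
    by_contra hne
    obtain ⟨x, hx⟩ : ∃ x : M, x ∉ m.domain := by
      by_contra h
      push_neg at h
      exact hne (Submodule.eq_top_iff'.2 h)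
    -- construct a strictly larger element of P
    set N := m.domain with hN
    set N' := N ⊔ Submodule.span R {x} with hN'
    have hxN' : x ∈ N' := Submodule.mem_sup_right (Submodule.mem_span_singleton_self x)
    have hNle : N ≤ N' := le_sup_left
    set I : Ideal R := N.comap (LinearMap.toSpanSingleton R M x) with hI
    obtain ⟨n, e, he⟩ := cyclic_embed hR I
    -- τ : R⧸I → M⧸N
    have hτcond : I ≤ LinearMap.ker (N.mkQ.comp (LinearMap.toSpanSingleton R M x)) := by
      intro r hr
      simp only [LinearMap.mem_ker, LinearMap.comp_apply, Submodule.mkQ_apply,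
        Submodule.Quotient.mk_eq_zero]
      exact hr
    set τ : (R ⧸ I) →ₗ[R] (M ⧸ N) :=
      Submodule.liftQ I (N.mkQ.comp (LinearMap.toSpanSingleton R M x)) hτcond with hτ
    have hτinj : Function.Injective τ := by
      rw [← LinearMap.ker_eq_bot]
      refine Submodule.ker_liftQ_eq_bot I _ _ ?_
      intro r hr
      simp only [LinearMap.mem_ker, LinearMap.comp_apply, Submodule.mkQ_apply,
        Submodule.Quotient.mk_eq_zero] at hr
      exact hr
    -- q restricted to N' lands in range τ
    have hrange : ∀ z : N', N.mkQ z ∈ LinearMap.range τ := by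
      rintro ⟨z, hz⟩
      obtain ⟨a, ha, b, hb, rfl⟩ := Submodule.mem_sup.mp hz
      obtain ⟨r, rfl⟩ := Submodule.mem_span_singleton.mp hb
      refine ⟨Submodule.Quotient.mk r, ?_⟩
      simp only [hτ, Submodule.liftQ_apply, LinearMap.comp_apply,
        LinearMap.toSpanSingleton_apply, Submodule.mkQ_apply]
      rw [Submodule.Quotient.eq]
      simpa using neg_mem ha
    set t : (R ⧸ I) ≃ₗ[R] LinearMap.range τ := LinearEquiv.ofInjective τ hτinj with ht
    set π : N' →ₗ[R] (R ⧸ I) := t.symm.toLinearMap.comp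
      (LinearMap.codRestrict (LinearMap.range τ) (N.mkQ.comp N'.subtype) hrange) with hπ
    have hπ0 : ∀ z : N', (z : M) ∈ N → π z = 0 := by
      intro z hz
      have : LinearMap.codRestrict (LinearMap.range τ) (N.mkQ.comp N'.subtype) hrange z = 0 := by
        apply Subtype.ext
        show (Submodule.Quotient.mk (z : M) : M ⧸ N) = 0
        exact (Submodule.Quotient.mk_eq_zero N).mpr hz
      simp only [hπ, LinearMap.comp_apply, this, map_zero]
    have hπker : ∀ z : N', π z = 0 → (z : M) ∈ N := by
      intro z hz
      have h4 : t (π z) = LinearMap.codRestrict (LinearMap.range τ) (N.mkQ.comp N'.subtype)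
          hrange z := by
        simp only [hπ, LinearMap.comp_apply, LinearEquiv.coe_coe]
        exact t.apply_symm_apply _
      rw [hz, map_zero] at h4
      have := congrArg Subtype.val h4
      simp only [Submodule.coe_zero, LinearMap.codRestrict_apply, LinearMap.comp_apply,
        Submodule.mkQ_apply, Submodule.coe_subtype] at this
      exact (Submodule.Quotient.mk_eq_zero N).mp this.symm
    -- extend m.toFun to N'
    obtain ⟨g, hg⟩ := (finsupp_injective hR (M × ℕ)).out (Submodule.inclusion hNle)
      (Submodule.inclusion_injective hNle) m.toFun
    -- the projection to coordinates with first component in N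
    set pN : F →ₗ[R] F :=
      { toFun := fun v => v.filter (fun p => p.1 ∈ N)
        map_add' := fun v w => Finsupp.filter_add
        map_smul' := fun r v => Finsupp.filter_smul } with hpN
    have hpN_apply : ∀ (v : F) (p : M × ℕ), pN v p = if p.1 ∈ N then v p else 0 := by
      intro v p
      rfl
    have hpN_id : ∀ v : F, (∀ p ∈ v.support, p.1 ∈ N) → pN v = v := by
      intro v hv
      ext p
      rw [hpN_apply]
      by_cases hp : p.1 ∈ N
      · rw [if_pos hp]
      · rw [if_neg hp]
        by_contra hne
        exact hp (hv p (Finsupp.mem_support_iff.mpr (fun h => hne h.symm)))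
    -- embedding of Fin n → R into fresh coordinates
    set em : (Fin n → R) →ₗ[R] F :=
      ∑ k : Fin n, (Finsupp.lsingle (x, (k : ℕ))).comp (LinearMap.proj k) with hem
    have hemv : ∀ v : Fin n → R, em v = ∑ k : Fin n,
        Finsupp.single ((x, (k : ℕ)) : M × ℕ) (v k) := by
      intro v
      rw [hem, LinearMap.sum_apply]
      refine Finset.sum_congr rfl (fun k _ => ?_)
      rfl
    have hem_apply : ∀ (v : Fin n → R) (k : Fin n), em v (x, (k : ℕ)) = v k := by
      intro v k
      rw [hemv, Finsupp.finset_sum_apply]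
      rw [Finset.sum_eq_single k]
      · simp
      · intro b _ hb
        refine Finsupp.single_eq_of_ne' ?_
        intro hcontra
        exact hb (Fin.ext (by injection hcontra with h1 h2))
      · intro hk; exact absurd (Finset.mem_univ k) hk
    have hem_supp : ∀ (v : Fin n → R) (p : M × ℕ), p ∈ (em v).support → p.1 = x := by
      intro v p hp
      by_contra hne
      refine Finsupp.mem_support_iff.mp hp ?_
      rw [hemv, Finsupp.finset_sum_apply]
      refine Finset.sum_eq_zero (fun k _ => ?_)
      refine Finsupp.single_eq_of_ne' ?_
      intro hcontra
      exact hne (by rw [← hcontra])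
    -- the new map
    set h : N' →ₗ[R] F := (pN.comp g) + (em.comp (e.comp π)) with hh'
    -- h extends m
    have hext : ∀ z : N, h (Submodule.inclusion hNle z) = m.toFun z := by
      intro z
      have h5 : π (Submodule.inclusion hNle z) = 0 := hπ0 _ z.2
      simp only [hh', LinearMap.add_apply, LinearMap.comp_apply, h5, map_zero, add_zero]
      rw [hg z]
      exact hpN_id _ (fun p hp => hmP.2 z p hp)
    -- h is injective
    have hinj : Function.Injective h := by
      have hker : ∀ z : N', h z = 0 → z = 0 := by
        intro z hz
        have hπz : π z = 0 := by
          have hek : ∀ k : Fin n, e (π z) k = 0 := by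
            intro k
            have hval : (h z) ((x, (k : ℕ)) : M × ℕ)
                = (pN (g z)) (x, (k : ℕ)) + (em (e (π z))) (x, (k : ℕ)) := by
              rw [hh']
              rfl
            rw [hz] at hval
            rw [hpN_apply, if_neg (by simpa using hx), hem_apply, zero_add] at hval
            exact hval.symm
          have h7 : e (π z) = 0 := funext hek
          exact he (by rw [h7, map_zero] : e (π z) = e 0)
        have hzN : (z : M) ∈ N := hπker z hπz
        have hz2 : h z = m.toFun ⟨(z : M), hzN⟩ := by
          have e0 : h (Submodule.inclusion hNle ⟨(z : M), hzN⟩)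
              = m.toFun ⟨(z : M), hzN⟩ := hext _
          have e1 : (Submodule.inclusion hNle ⟨(z : M), hzN⟩) = z := Subtype.ext rfl
          rw [e1] at e0
          exact e0
        rw [hz2] at hz
        have : (⟨(z : M), hzN⟩ : N) = 0 := hmP.1 (by rw [hz, map_zero])
        exact Subtype.ext (Subtype.mk_eq_mk.mp this)
      intro a b hab
      have := hker (a - b) (by rw [map_sub, hab, sub_self])
      rwa [sub_eq_zero] at this
    -- support condition for h
    have hsupp : ∀ (z : N') (p : M × ℕ), p ∈ (h z).support → p.1 ∈ N' := by
      intro z p hp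
      have : h z = pN (g z) + em (e (π z)) := by
        simp only [hh', LinearMap.add_apply, LinearMap.comp_apply]
      rw [this] at hp
      rcases Finset.mem_union.mp (Finsupp.support_add hp) with h6 | h6
      · have := Finsupp.mem_support_iff.mp h6
        rw [hpN_apply] at this
        by_cases hpn : p.1 ∈ N
        · exact hNle hpn
        · rw [if_neg hpn] at this; exact absurd rfl this
      · rw [hem_supp _ p h6]; exact hxN'
    -- the extension as a LinearPMap
    set f' : M →ₗ.[R] F := ⟨N', h⟩ with hf'
    have hle : m ≤ f' := by
      refine ⟨hNle, ?_⟩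
      intro a b hab
      have : b = Submodule.inclusion hNle a := Subtype.ext hab.symm
      rw [this]
      exact (hext a).symm
    have hf'P : f' ∈ P := ⟨hinj, hsupp⟩
    have := hmax hf'P hle
    exact hx (this.1 hxN')

  -- conclude
  refine ⟨M × ℕ, m.toFun.comp ((Submodule.inclusion hdom.ge).comp
    (Submodule.topEquiv.symm.toLinearMap : M →ₗ[R] (⊤ : Submodule R M))), ?_⟩
  intro a b hab
  have h3 := hmP.1 hab
  exact show a = b from congrArg Subtype.val h3


/-- A retract of an injective module is injective. -/
theorem injective_of_retract {Q E : Type u} [AddCommGroup Q] [Module R Q]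
    [AddCommGroup E] [Module R E] (i : Q →ₗ[R] E) (p : E →ₗ[R] Q)
    (hpi : ∀ q, p (i q) = q) (hE : Module.Injective R E) : Module.Injective R Q := by
  constructor
  intro X Y _ _ _ _ f hf g
  obtain ⟨h, hh⟩ := hE.out f hf (i.comp g)
  exact ⟨p.comp h, fun x => by simp [hh x, hpi]⟩

/-- Over a QF ring, projective modules are injective. -/
theorem injective_of_projective (hR : Module.Injective R R) (Q : Type u)
    [AddCommGroup Q] [Module R Q] (hQ : Module.Projective R Q) :
    Module.Injective R Q := by
  obtain ⟨s, hs⟩ := hQ.out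
  exact injective_of_retract s (Finsupp.linearCombination R id) hs
    (finsupp_injective hR Q)

/-- Over a QF ring, injective modules are projective. -/
theorem projective_of_injective (hR : Module.Injective R R) (E : Type u)
    [AddCommGroup E] [Module R E] (hE : Module.Injective R E) :
    Module.Projective R E := by
  obtain ⟨ι, f, hf⟩ := embed_free hR E
  obtain ⟨p, hp⟩ := hE.out f hf LinearMap.id
  exact Module.Projective.of_split f p (by ext x; exact hp x)


end Aux

section Acyc
variable {R : Type u} [CommRing R]

/-- Hom into an injective module takes acyclic complexes to acyclic complexes. -/
theorem homAcyclic_of_injective (L : ModComplex R) (hL : L.Acyclic)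
    (Q : Type u) [AddCommGroup Q] [Module R Q] (hQ : Module.Injective R Q) :
    L.HomAcyclic Q := by
  intro i φ
  constructor
  · intro h0
    have hker : LinearMap.ker (L.d i) = LinearMap.range (L.d (i + 1)) :=
      LinearMap.exact_iff.mp (hL i)
    have hle : LinearMap.ker (L.d i) ≤ LinearMap.ker φ := by
      rw [hker]
      rintro y ⟨z, rfl⟩
      exact congrFun (congrArg (fun f => f.toFun) h0) z
    set K := LinearMap.ker (L.d i)
    set φ' : (LinearMap.range (L.d i)) →ₗ[R] Q :=
      (Submodule.liftQ K φ hle).comp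
        ((L.d i).quotKerEquivRange.symm.toLinearMap) with hφ'
    obtain ⟨ψ, hψ⟩ := hQ.out (LinearMap.range (L.d i)).subtype
      (Submodule.injective_subtype _) φ'
    refine ⟨ψ, ?_⟩
    ext y
    have h1 : ψ (L.d i y) = φ' ⟨L.d i y, LinearMap.mem_range_self _ y⟩ :=
      hψ ⟨L.d i y, LinearMap.mem_range_self _ y⟩
    have h2 : (L.d i).quotKerEquivRange (Submodule.Quotient.mk y)
        = ⟨L.d i y, LinearMap.mem_range_self _ y⟩ :=
      Subtype.ext ((L.d i).quotKerEquivRange_apply_mk y)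
    have h3 : φ' ⟨L.d i y, LinearMap.mem_range_self _ y⟩ = φ y := by
      rw [hφ', LinearMap.comp_apply, LinearEquiv.coe_coe, ← h2,
        LinearEquiv.symm_apply_apply]
      exact Submodule.liftQ_apply K φ y
    simp only [LinearMap.comp_apply]
    rw [h1, h3]
  · rintro ⟨ψ, rfl⟩
    ext z
    simp only [LinearMap.comp_apply, LinearMap.zero_apply]
    rw [← LinearMap.comp_apply (L.d i) (L.d (i+1)), L.dd i]
    simp

/-- Hom from a projective module takes acyclic complexes to acyclic complexes. -/
theorem coHomAcyclic_of_projective (L : ModComplex R) (hL : L.Acyclic)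
    (E : Type u) [AddCommGroup E] [Module R E] (hE : Module.Projective R E) :
    L.CoHomAcyclic E := by
  intro i φ
  constructor
  · intro h0
    have hker : LinearMap.ker (L.d i) = LinearMap.range (L.d (i + 1)) :=
      LinearMap.exact_iff.mp (hL i)
    have hmem : ∀ x : E, φ x ∈ LinearMap.range (L.d (i + 1)) := by
      intro x
      rw [← hker]
      exact congrFun (congrArg (fun f => f.toFun) h0) x
    set φ' : E →ₗ[R] (LinearMap.range (L.d (i + 1))) :=
      LinearMap.codRestrict _ φ hmem with hφ'
    obtain ⟨h, hh⟩ := Module.projective_lifting_property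
      ((L.d (i + 1)).rangeRestrict) φ' (L.d (i + 1)).surjective_rangeRestrict
    refine ⟨h, ?_⟩
    ext x
    have := congrArg (fun f => Subtype.val (f x)) hh
    simpa [hφ'] using this
  · rintro ⟨ψ, rfl⟩
    ext z
    simp only [LinearMap.comp_apply, LinearMap.zero_apply]
    rw [← LinearMap.comp_apply (L.d i) (L.d (i+1)), L.dd i]
    simp


end Acyc

section Seq
variable (R : Type u) [CommRing R] [IsNoetherianRing R]

noncomputable def freeCov (N : ModuleCat.{u} R) : ModuleCat.{u} R :=
  ModuleCat.of R ((N : Type u) →₀ R)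

noncomputable def eps (N : ModuleCat.{u} R) : (freeCov R N : Type u) →ₗ[R] (N : Type u) :=
  Finsupp.linearCombination R _root_.id

theorem eps_surj (N : ModuleCat.{u} R) : Function.Surjective (eps R N) := by
  intro x
  refine ⟨Finsupp.single x 1, ?_⟩
  show Finsupp.linearCombination R _root_.id (Finsupp.single x 1) = x
  rw [Finsupp.linearCombination_single, one_smul]
  rfl

noncomputable def syz (N : ModuleCat.{u} R) : ModuleCat.{u} R :=
  ModuleCat.of R (LinearMap.ker (eps R N))

noncomputable def envIdx (hR : Module.Injective R R) (N : ModuleCat.{u} R) : Type u :=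
  Classical.choose (embed_free hR (N : Type u))

noncomputable def env (hR : Module.Injective R R) (N : ModuleCat.{u} R) : ModuleCat.{u} R :=
  ModuleCat.of R ((envIdx R hR N) →₀ R)

noncomputable def emb (hR : Module.Injective R R) (N : ModuleCat.{u} R) :
    (N : Type u) →ₗ[R] (env R hR N : Type u) :=
  Classical.choose (Classical.choose_spec (embed_free hR (N : Type u)))

theorem emb_inj (hR : Module.Injective R R) (N : ModuleCat.{u} R) :
    Function.Injective (emb R hR N) :=
  Classical.choose_spec (Classical.choose_spec (embed_free hR (N : Type u)))

noncomputable def cosyz (hR : Module.Injective R R) (N : ModuleCat.{u} R) : ModuleCat.{u} R :=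
  ModuleCat.of R ((env R hR N : Type u) ⧸ LinearMap.range (emb R hR N))

variable (M : Type u) [AddCommGroup M] [Module R M]

noncomputable def Tseq : ℕ → ModuleCat.{u} R
  | 0 => ModuleCat.of R M
  | n + 1 => syz R (Tseq n)

noncomputable def Useq (hR : Module.Injective R R) : ℕ → ModuleCat.{u} R
  | 0 => ModuleCat.of R M
  | n + 1 => cosyz R hR (Useq hR n)

noncomputable def incl (n : ℕ) :
    (Tseq R M (n+1) : Type u) →ₗ[R] (freeCov R (Tseq R M n) : Type u) :=
  (LinearMap.ker (eps R (Tseq R M n))).subtype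

noncomputable def dA (n : ℕ) :
    (freeCov R (Tseq R M (n+1)) : Type u) →ₗ[R] (freeCov R (Tseq R M n) : Type u) :=
  (incl R M n).comp (eps R (Tseq R M (n+1)))

noncomputable def dC (hR : Module.Injective R R) (n : ℕ) :
    (env R hR (Useq R M hR n) : Type u) →ₗ[R] (env R hR (Useq R M hR (n+1)) : Type u) :=
  (emb R hR (Useq R M hR (n+1))).comp (LinearMap.range (emb R hR (Useq R M hR n))).mkQ

noncomputable def dJ (hR : Module.Injective R R) :
    (freeCov R (Tseq R M 0) : Type u) →ₗ[R] (env R hR (Useq R M hR 0) : Type u) :=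
  (emb R hR (Useq R M hR 0)).comp (eps R (Tseq R M 0))

-- range of dA n is ker of eps (Tseq n)
theorem range_dA (n : ℕ) :
    LinearMap.range (dA R M n) = LinearMap.ker (eps R (Tseq R M n)) := by
  rw [dA, LinearMap.range_comp_of_range_eq_top _ (LinearMap.range_eq_top.mpr
    (eps_surj R (Tseq R M (n+1)))), incl]
  exact Submodule.range_subtype _

-- applying dA
theorem dA_apply_eq_zero_iff (n : ℕ) (y : (freeCov R (Tseq R M (n+1)) : Type u)) :
    dA R M n y = 0 ↔ eps R (Tseq R M (n+1)) y = 0 := by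
  rw [dA, LinearMap.comp_apply, incl]
  constructor
  · intro h
    exact Submodule.coe_eq_zero.mp h
  · intro h
    rw [h]
    exact map_zero _

theorem dA_dA (n : ℕ) : (dA R M n).comp (dA R M (n+1)) = 0 := by
  ext y
  simp only [LinearMap.comp_apply, LinearMap.zero_apply]
  rw [dA_apply_eq_zero_iff]
  exact (eps R (Tseq R M (n+2)) y).2

theorem exact_dA (n : ℕ) :
    Function.Exact (dA R M (n+1)) (dA R M n) := by
  intro y
  rw [dA_apply_eq_zero_iff]
  constructor
  · intro h
    have hy : y ∈ LinearMap.range (dA R M (n+1)) := by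
      rw [range_dA]
      exact LinearMap.mem_ker.mpr h
    obtain ⟨z, hz⟩ := hy
    exact ⟨z, hz⟩
  · rintro ⟨z, rfl⟩
    have hy : dA R M (n+1) z ∈ LinearMap.range (dA R M (n+1)) :=
      LinearMap.mem_range_self _ z
    rw [range_dA] at hy
    exact hy

section CoRes
variable {hR : Module.Injective R R}

theorem emb_eq_zero_iff (N : ModuleCat.{u} R) (w : (N : Type u)) :
    emb R hR N w = 0 ↔ w = 0 := by
  constructor
  · intro h
    exact emb_inj R hR N (h.trans (map_zero _).symm)
  · rintro rfl
    exact map_zero _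

theorem range_dC (n : ℕ) :
    LinearMap.range (dC R M hR n) = LinearMap.range (emb R hR (Useq R M hR (n+1))) := by
  exact LinearMap.range_comp_of_range_eq_top (emb R hR (Useq R M hR (n+1)))
    (LinearMap.range_eq_top.mpr (Submodule.mkQ_surjective (LinearMap.range (emb R hR (Useq R M hR n)))))

theorem dC_apply_eq_zero_iff (n : ℕ) (y : (env R hR (Useq R M hR n) : Type u)) :
    dC R M hR n y = 0 ↔ y ∈ LinearMap.range (emb R hR (Useq R M hR n)) := by
  exact (emb_eq_zero_iff R (Useq R M hR (n+1))
    ((LinearMap.range (emb R hR (Useq R M hR n))).mkQ y)).trans (Submodule.Quotient.mk_eq_zero _)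

theorem dC_dC (n : ℕ) : (dC R M hR (n+1)).comp (dC R M hR n) = 0 := by
  ext y
  simp only [LinearMap.comp_apply, LinearMap.zero_apply]
  rw [dC_apply_eq_zero_iff]
  exact LinearMap.mem_range_self (emb R hR (Useq R M hR (n+1)))
    ((LinearMap.range (emb R hR (Useq R M hR n))).mkQ y)

theorem exact_dC (n : ℕ) :
    Function.Exact (dC R M hR n) (dC R M hR (n+1)) := by
  intro y
  rw [dC_apply_eq_zero_iff]
  constructor
  · intro h
    have hy : y ∈ LinearMap.range (dC R M hR n) := by rw [range_dC]; exact h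
    obtain ⟨z, hz⟩ := hy
    exact ⟨z, hz⟩
  · rintro ⟨z, rfl⟩
    have hy : dC R M hR n z ∈ LinearMap.range (dC R M hR n) :=
      LinearMap.mem_range_self _ z
    rw [range_dC] at hy
    exact hy

theorem range_dJ :
    LinearMap.range (dJ R M hR) = LinearMap.range (emb R hR (Useq R M hR 0)) := by
  exact LinearMap.range_comp_of_range_eq_top (emb R hR (Useq R M hR 0))
    (LinearMap.range_eq_top.mpr (eps_surj R (Tseq R M 0)))

theorem dJ_apply_eq_zero_iff (y : (freeCov R (Tseq R M 0) : Type u)) :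
    dJ R M hR y = 0 ↔ eps R (Tseq R M 0) y = 0 := by
  exact emb_eq_zero_iff R (Useq R M hR 0) (eps R (Tseq R M 0) y)

theorem dJ_dA0 : (dJ R M hR).comp (dA R M 0) = 0 := by
  ext y
  simp only [LinearMap.comp_apply, LinearMap.zero_apply]
  rw [dJ_apply_eq_zero_iff]
  have hy : dA R M 0 y ∈ LinearMap.range (dA R M 0) := LinearMap.mem_range_self _ y
  rw [range_dA] at hy
  exact hy

theorem dC0_dJ : (dC R M hR 0).comp (dJ R M hR) = 0 := by
  ext y
  simp only [LinearMap.comp_apply, LinearMap.zero_apply]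
  rw [dC_apply_eq_zero_iff]
  exact LinearMap.mem_range_self (emb R hR (Useq R M hR 0)) (eps R (Tseq R M 0) y)

theorem exact_dA0_dJ : Function.Exact (dA R M 0) (dJ R M hR) := by
  intro y
  rw [dJ_apply_eq_zero_iff]
  constructor
  · intro h
    have hy : y ∈ LinearMap.range (dA R M 0) := by
      rw [range_dA]
      exact LinearMap.mem_ker.mpr h
    obtain ⟨z, hz⟩ := hy
    exact ⟨z, hz⟩
  · rintro ⟨z, rfl⟩
    have hy : dA R M 0 z ∈ LinearMap.range (dA R M 0) := LinearMap.mem_range_self _ z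
    rw [range_dA] at hy
    exact hy

theorem exact_dJ_dC0 : Function.Exact (dJ R M hR) (dC R M hR 0) := by
  intro y
  rw [dC_apply_eq_zero_iff]
  constructor
  · intro h
    have hy : y ∈ LinearMap.range (dJ R M hR) := by rw [range_dJ]; exact h
    obtain ⟨z, hz⟩ := hy
    exact ⟨z, hz⟩
  · rintro ⟨z, rfl⟩
    have hy : dJ R M hR z ∈ LinearMap.range (dJ R M hR) := LinearMap.mem_range_self _ z
    rw [range_dJ] at hy
    exact hy

theorem ker_dC (n : ℕ) :
    LinearMap.ker (dC R M hR n) = LinearMap.range (emb R hR (Useq R M hR n)) := by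
  ext y
  rw [LinearMap.mem_ker, dC_apply_eq_zero_iff]

theorem ker_eps_eq_range_dA0 :
    LinearMap.ker (eps R (Tseq R M 0)) = LinearMap.range (dA R M 0) :=
  (range_dA R M 0).symm

end CoRes



section Glue
variable (R : Type u) [CommRing R]
variable (A B : ℕ → ModuleCat.{u} R)
variable (gA : ∀ n, (A (n+1) : Type u) →ₗ[R] (A n : Type u))
variable (gB : ∀ n, (B n : Type u) →ₗ[R] (B (n+1) : Type u))
variable (gj : (A 0 : Type u) →ₗ[R] (B 0 : Type u))

noncomputable def glueX : ℤ → ModuleCat.{u} R := fun i =>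
  match i with
  | .ofNat n => A n
  | .negSucc n => B n

noncomputable def glueD : ∀ i : ℤ, (glueX R A B (i+1) : Type u) →ₗ[R] (glueX R A B i : Type u) :=
  fun i =>
  match i with
  | .ofNat n => gA n
  | .negSucc 0 => gj
  | .negSucc (n+1) => gB n

noncomputable def glue
    (h1 : ∀ n, (gA n).comp (gA (n+1)) = 0)
    (h2 : gj.comp (gA 0) = 0)
    (h3 : (gB 0).comp gj = 0)
    (h4 : ∀ n, (gB (n+1)).comp (gB n) = 0) : ModComplex R where
  X := fun i => (glueX R A B i : Type u)
  d := glueD R A B gA gB gj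
  dd := by
    intro i
    match i with
    | .ofNat n => exact h1 n
    | .negSucc 0 => exact h2
    | .negSucc 1 => exact h3
    | .negSucc (n+2) => exact h4 n

theorem glue_acyclic
    (h1 : ∀ n, (gA n).comp (gA (n+1)) = 0)
    (h2 : gj.comp (gA 0) = 0)
    (h3 : (gB 0).comp gj = 0)
    (h4 : ∀ n, (gB (n+1)).comp (gB n) = 0)
    (e1 : ∀ n, Function.Exact (gA (n+1)) (gA n))
    (e2 : Function.Exact (gA 0) gj)
    (e3 : Function.Exact gj (gB 0))
    (e4 : ∀ n, Function.Exact (gB n) (gB (n+1))) :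
    (glue R A B gA gB gj h1 h2 h3 h4).Acyclic := by
  intro i
  match i with
  | .ofNat n => exact e1 n
  | .negSucc 0 => exact e2
  | .negSucc 1 => exact e3
  | .negSucc (n+2) => exact e4 n
end Glue


section GIComplex
variable (R : Type u) [CommRing R] [IsNoetherianRing R]
variable (M : Type u) [AddCommGroup M] [Module R M]
variable (hR : Module.Injective R R)

/-- The positive part of the complex witnessing Gorenstein injectivity. -/
noncomputable def giA : ℕ → ModuleCat.{u} R := fun n =>
  match n with
  | 0 => env R hR (Useq R M hR 1)
  | 1 => env R hR (Useq R M hR 0)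
  | n+2 => freeCov R (Tseq R M n)

/-- The differentials of the positive part. -/
noncomputable def giDA : ∀ n, (giA R M hR (n+1) : Type u) →ₗ[R] (giA R M hR n : Type u) :=
  fun n =>
  match n with
  | 0 => dC R M hR 0
  | 1 => dJ R M hR
  | n+2 => dA R M n

end GIComplex

/-- Over a quasi-Frobenius ring (Noetherian and self-injective), every module
is Gorenstein projective and Gorenstein injective. -/
theorem gorensteinProjective_and_injective_of_quasiFrobenius
    {R : Type u} [CommRing R] [IsNoetherianRing R]
    (hR : Module.Injective R R)
    (M : Type u) [AddCommGroup M] [Module R M] :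
    IsGorensteinProjective R M ∧ IsGorensteinInjective R M := by
  classical
  constructor
  · -- Gorenstein projective
    have hac := glue_acyclic R (fun n => freeCov R (Tseq R M n))
      (fun n => env R hR (Useq R M hR n)) (dA R M) (dC R M hR) (dJ R M hR)
      (dA_dA R M) (dJ_dA0 R M) (dC0_dJ R M) (dC_dC R M)
      (exact_dA R M) (exact_dA0_dJ R M) (exact_dJ_dC0 R M) (exact_dC R M)
    refine ⟨glue R (fun n => freeCov R (Tseq R M n))
      (fun n => env R hR (Useq R M hR n)) (dA R M) (dC R M hR) (dJ R M hR)
      (dA_dA R M) (dJ_dA0 R M) (dC0_dJ R M) (dC_dC R M), hac, ?_, ?_, ?_⟩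
    · intro i
      match i with
      | .ofNat n =>
        exact inferInstanceAs (Module.Projective R ((Tseq R M n : Type u) →₀ R))
      | .negSucc n =>
        exact inferInstanceAs (Module.Projective R ((envIdx R hR (Useq R M hR n)) →₀ R))
    · intro Q _ _ hQ
      exact homAcyclic_of_injective _ hac Q (injective_of_projective hR Q hQ)
    · refine ⟨eps R (Tseq R M 0), eps_surj R (Tseq R M 0), ?_⟩
      exact ker_eps_eq_range_dA0 R M
  · -- Gorenstein injective
    have hac := glue_acyclic R (giA R M hR)
      (fun n => env R hR (Useq R M hR (n+2))) (giDA R M hR) (fun n => dC R M hR (n+2))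
      (dC R M hR 1)
      (fun n => match n with
        | 0 => dC0_dJ R M
        | 1 => dJ_dA0 R M
        | n+2 => dA_dA R M n)
      (dC_dC R M 0) (dC_dC R M 1) (fun n => dC_dC R M (n+2))
      (fun n => match n with
        | 0 => exact_dJ_dC0 R M
        | 1 => exact_dA0_dJ R M
        | n+2 => exact_dA R M n)
      (exact_dC R M 0) (exact_dC R M 1) (fun n => exact_dC R M (n+2))
    refine ⟨glue R (giA R M hR)
      (fun n => env R hR (Useq R M hR (n+2))) (giDA R M hR) (fun n => dC R M hR (n+2))
      (dC R M hR 1)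
      (fun n => match n with
        | 0 => dC0_dJ R M
        | 1 => dJ_dA0 R M
        | n+2 => dA_dA R M n)
      (dC_dC R M 0) (dC_dC R M 1) (fun n => dC_dC R M (n+2)), hac, ?_, ?_, ?_⟩
    · intro i
      match i with
      | .ofNat 0 =>
        exact finsupp_injective hR (envIdx R hR (Useq R M hR 1))
      | .ofNat 1 =>
        exact finsupp_injective hR (envIdx R hR (Useq R M hR 0))
      | .ofNat (n+2) =>
        exact finsupp_injective hR (Tseq R M n : Type u)
      | .negSucc n =>
        exact finsupp_injective hR (envIdx R hR (Useq R M hR (n+2)))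
    · intro E _ _ hE
      exact coHomAcyclic_of_projective _ hac E (projective_of_injective hR E hE)
    · refine ⟨emb R hR (Useq R M hR 0), emb_inj R hR (Useq R M hR 0), ?_⟩
      exact (ker_dC R M 0).symm
end Seq
end

section
/- Let R be a commutative ring and 0 → M' → M → M'' → 0 an exact sequence of R-modules. If M' and M'' are Gorenstein projective, then M is Gorenstein projective. -/
universe u

open TensorProduct

namespace GPaux

variable {R : Type u} [CommRing R]

theorem lift {P N N' : Type u} [AddCommGroup P] [Module R P]
    [AddCommGroup N] [Module R N] [AddCommGroup N'] [Module R N']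
    (hP : Module.Projective R P) (F : N' →ₗ[R] N) (φ : P →ₗ[R] N)
    (h : LinearMap.range φ ≤ LinearMap.range F) :
    ∃ t : P →ₗ[R] N', F.comp t = φ := by
  haveI := hP
  obtain ⟨t, ht⟩ := Module.projective_lifting_property F.rangeRestrict
    (φ.codRestrict (LinearMap.range F) fun x => h (LinearMap.mem_range_self φ x))
    F.surjective_rangeRestrict
  refine ⟨t, ?_⟩
  ext x
  exact congrArg Subtype.val (LinearMap.congr_fun ht x)

theorem lift_neg {P N N' : Type u} [AddCommGroup P] [Module R P]
    [AddCommGroup N] [Module R N] [AddCommGroup N'] [Module R N']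
    (hP : Module.Projective R P) (F : N' →ₗ[R] N) (φ : P →ₗ[R] N)
    (h : LinearMap.range φ ≤ LinearMap.range F) :
    ∃ t : P →ₗ[R] N', F.comp t + φ = 0 := by
  obtain ⟨t, ht⟩ := lift hP F (-φ) (by rwa [LinearMap.range_neg])
  exact ⟨t, by rw [ht]; exact neg_add_cancel φ⟩

variable (L1 L2 : ModComplex R)

noncomputable def up
    (hac : L1.Acyclic) (hproj2 : ∀ i : ℤ, Module.Projective R (L2.X i))
    (θ0 : L2.X ((0:ℤ)+1) →ₗ[R] L1.X 0)
    (hbase : LinearMap.range (θ0.comp (L2.d ((0:ℤ)+1))) ≤ LinearMap.range (L1.d 0)) :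
    (n : ℕ) → Σ' p : (L2.X ((n:ℤ)+1) →ₗ[R] L1.X (n:ℤ)) × (L2.X ((n:ℤ)+1+1) →ₗ[R] L1.X ((n:ℤ)+1)),
      (L1.d (n:ℤ)).comp p.2 + p.1.comp (L2.d ((n:ℤ)+1)) = 0
  | 0 =>
      ⟨⟨θ0, (lift_neg (hproj2 _) (L1.d 0) (θ0.comp (L2.d ((0:ℤ)+1))) hbase).choose⟩,
        (lift_neg (hproj2 _) (L1.d 0) (θ0.comp (L2.d ((0:ℤ)+1))) hbase).choose_spec⟩
  | (n+1) =>
      let q := up hac hproj2 θ0 hbase n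
      have hr : LinearMap.range (q.1.2.comp (L2.d ((n:ℤ)+1+1)))
          ≤ LinearMap.range (L1.d ((n:ℤ)+1)) := by
        rw [← LinearMap.exact_iff.mp (hac (n:ℤ)), LinearMap.range_le_ker_iff,
          ← LinearMap.comp_assoc, eq_neg_of_add_eq_zero_left q.2, LinearMap.neg_comp,
          LinearMap.comp_assoc, L2.dd, LinearMap.comp_zero, neg_zero]
      ⟨⟨q.1.2, (lift_neg (hproj2 _) (L1.d ((n:ℤ)+1)) (q.1.2.comp (L2.d ((n:ℤ)+1+1))) hr).choose⟩,
        (lift_neg (hproj2 _) (L1.d ((n:ℤ)+1)) (q.1.2.comp (L2.d ((n:ℤ)+1+1))) hr).choose_spec⟩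

noncomputable def dn
    (hac : L1.Acyclic) (hproj1 : ∀ i : ℤ, Module.Projective R (L1.X i))
    (hhom : ∀ (N : Type u) [AddCommGroup N] [Module R N],
      Module.Projective R N → L2.HomAcyclic N)
    (θ0 : L2.X ((0:ℤ)+1) →ₗ[R] L1.X 0)
    (hbase : LinearMap.range (θ0.comp (L2.d ((0:ℤ)+1))) ≤ LinearMap.range (L1.d 0)) :
    (n : ℕ) → Σ' p : (L2.X (Int.negSucc n + 1 + 1) →ₗ[R] L1.X (Int.negSucc n + 1))
        × (L2.X (Int.negSucc n + 1) →ₗ[R] L1.X (Int.negSucc n)),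
      (L1.d (Int.negSucc n)).comp p.1 + p.2.comp (L2.d (Int.negSucc n + 1)) = 0
  | 0 =>
      have hψ : ((-(L1.d (Int.negSucc 0)).comp θ0)).comp (L2.d (Int.negSucc 0 + 1 + 1)) = 0 := by
        have h0 : LinearMap.range (θ0.comp (L2.d ((0:ℤ)+1)))
            ≤ LinearMap.ker (L1.d (Int.negSucc 0)) := by
          rw [LinearMap.exact_iff.mp (hac (Int.negSucc 0))]
          exact hbase
        rw [LinearMap.neg_comp, LinearMap.comp_assoc, neg_eq_zero]
        exact LinearMap.range_le_ker_iff.mp h0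
      have ht : ∃ t : L2.X (Int.negSucc 0 + 1) →ₗ[R] L1.X (Int.negSucc 0),
          t.comp (L2.d (Int.negSucc 0 + 1)) = -(L1.d (Int.negSucc 0)).comp θ0 :=
        (hhom (L1.X (Int.negSucc 0)) (hproj1 _) (Int.negSucc 0 + 1)
          (-(L1.d (Int.negSucc 0)).comp θ0)).mp hψ
      ⟨⟨θ0, ht.choose⟩, by rw [ht.choose_spec]; exact add_neg_cancel _⟩
  | (n+1) =>
      let q := dn hac hproj1 hhom θ0 hbase n
      have hq : q.1.2.comp (L2.d (Int.negSucc n + 1)) = -((L1.d (Int.negSucc n)).comp q.1.1) :=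
        eq_neg_of_add_eq_zero_right q.2
      have hψ : ((-(L1.d (Int.negSucc (n+1))).comp q.1.2)).comp
          (L2.d (Int.negSucc (n+1) + 1 + 1)) = 0 := by
        rw [LinearMap.neg_comp, LinearMap.comp_assoc, neg_eq_zero]
        show (L1.d (Int.negSucc (n+1))).comp (q.1.2.comp (L2.d (Int.negSucc n + 1))) = 0
        rw [hq, LinearMap.comp_neg, ← LinearMap.comp_assoc, neg_eq_zero]
        show ((L1.d (Int.negSucc (n+1))).comp (L1.d (Int.negSucc (n+1) + 1))).comp q.1.1 = 0
        rw [L1.dd, LinearMap.zero_comp]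
      have ht : ∃ t : L2.X (Int.negSucc (n+1) + 1) →ₗ[R] L1.X (Int.negSucc (n+1)),
          t.comp (L2.d (Int.negSucc (n+1) + 1)) = -(L1.d (Int.negSucc (n+1))).comp q.1.2 :=
        (hhom (L1.X (Int.negSucc (n+1))) (hproj1 _) (Int.negSucc (n+1) + 1)
          (-(L1.d (Int.negSucc (n+1))).comp q.1.2)).mp hψ
      ⟨⟨q.1.2, ht.choose⟩, by rw [ht.choose_spec]; exact add_neg_cancel _⟩

noncomputable def theta
    (hac : L1.Acyclic) (hproj1 : ∀ i : ℤ, Module.Projective R (L1.X i))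
    (hproj2 : ∀ i : ℤ, Module.Projective R (L2.X i))
    (hhom : ∀ (N : Type u) [AddCommGroup N] [Module R N],
      Module.Projective R N → L2.HomAcyclic N)
    (θ0 : L2.X ((0:ℤ)+1) →ₗ[R] L1.X 0)
    (hbase : LinearMap.range (θ0.comp (L2.d ((0:ℤ)+1))) ≤ LinearMap.range (L1.d 0)) :
    ∀ i : ℤ, L2.X (i+1) →ₗ[R] L1.X i
  | .ofNat n => (up L1 L2 hac hproj2 θ0 hbase n).1.1
  | .negSucc n => (dn L1 L2 hac hproj1 hhom θ0 hbase n).1.2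

theorem theta_zero
    (hac : L1.Acyclic) (hproj1 : ∀ i : ℤ, Module.Projective R (L1.X i))
    (hproj2 : ∀ i : ℤ, Module.Projective R (L2.X i))
    (hhom : ∀ (N : Type u) [AddCommGroup N] [Module R N],
      Module.Projective R N → L2.HomAcyclic N)
    (θ0 : L2.X ((0:ℤ)+1) →ₗ[R] L1.X 0)
    (hbase : LinearMap.range (θ0.comp (L2.d ((0:ℤ)+1))) ≤ LinearMap.range (L1.d 0)) :
    theta L1 L2 hac hproj1 hproj2 hhom θ0 hbase 0 = θ0 := rfl

theorem theta_constraint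
    (hac : L1.Acyclic) (hproj1 : ∀ i : ℤ, Module.Projective R (L1.X i))
    (hproj2 : ∀ i : ℤ, Module.Projective R (L2.X i))
    (hhom : ∀ (N : Type u) [AddCommGroup N] [Module R N],
      Module.Projective R N → L2.HomAcyclic N)
    (θ0 : L2.X ((0:ℤ)+1) →ₗ[R] L1.X 0)
    (hbase : LinearMap.range (θ0.comp (L2.d ((0:ℤ)+1))) ≤ LinearMap.range (L1.d 0)) :
    ∀ i : ℤ, (L1.d i).comp (theta L1 L2 hac hproj1 hproj2 hhom θ0 hbase (i+1))
      + (theta L1 L2 hac hproj1 hproj2 hhom θ0 hbase i).comp (L2.d (i+1)) = 0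
  | .ofNat n => (up L1 L2 hac hproj2 θ0 hbase n).2
  | .negSucc 0 => (dn L1 L2 hac hproj1 hhom θ0 hbase 0).2
  | .negSucc (n+1) => (dn L1 L2 hac hproj1 hhom θ0 hbase (n+1)).2

end GPaux

/-- The class of Gorenstein projective modules is closed under extensions:
if `0 → M' → M → M'' → 0` is exact with `M'` and `M''` Gorenstein projective,
then so is `M`. -/
theorem gorensteinProjective_of_extension {R : Type u} [CommRing R]
    {M' M M'' : Type u}
    [AddCommGroup M'] [Module R M'] [AddCommGroup M] [Module R M]
    [AddCommGroup M''] [Module R M'']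
    (f : M' →ₗ[R] M) (g : M →ₗ[R] M'')
    (hf : Function.Injective f) (hg : Function.Surjective g)
    (hfg : LinearMap.range f = LinearMap.ker g)
    (h' : IsGorensteinProjective R M') (h'' : IsGorensteinProjective R M'') :
    IsGorensteinProjective R M := by
  obtain ⟨L1, hac1, hproj1, hhom1, f', hf's, hf'k⟩ := h'
  obtain ⟨L2, hac2, hproj2, hhom2, f'', hf''s, hf''k⟩ := h''
  have hgf : ∀ x, g (f x) = 0 := by
    intro x
    have hx : f x ∈ LinearMap.ker g := hfg ▸ LinearMap.mem_range_self f x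
    simpa using hx
  -- lift of f'' through g
  obtain ⟨β, hβ⟩ := GPaux.lift (hproj2 0) g f''
    (by rw [LinearMap.range_eq_top.mpr hg]; exact le_top)
  have hβd : ∀ b, g (β (L2.d 0 b)) = 0 := by
    intro b
    have h1 : L2.d 0 b ∈ LinearMap.ker f'' := by
      rw [hf''k]; exact LinearMap.mem_range_self _ b
    have h2 : g (β (L2.d 0 b)) = f'' (L2.d 0 b) := LinearMap.congr_fun hβ _
    rw [h2]; simpa using h1
  -- γ with f ∘ γ = -(β ∘ d₀'')
  obtain ⟨γ, hγ⟩ := GPaux.lift (hproj2 ((0:ℤ)+1)) f (-(β.comp (L2.d 0))) (by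
    rw [hfg]
    rintro x ⟨b, rfl⟩
    simp only [LinearMap.neg_apply, LinearMap.comp_apply, LinearMap.mem_ker, map_neg,
      hβd, neg_zero])
  -- θ0 with f' ∘ θ0 = γ
  obtain ⟨θ0, hθ0⟩ := GPaux.lift (hproj2 ((0:ℤ)+1)) f' γ
    (by rw [LinearMap.range_eq_top.mpr hf's]; exact le_top)
  have hbase : LinearMap.range (θ0.comp (L2.d ((0:ℤ)+1))) ≤ LinearMap.range (L1.d 0) := by
    rw [← hf'k, LinearMap.range_le_ker_iff]
    have h1 : f.comp ((f'.comp θ0).comp (L2.d ((0:ℤ)+1))) = 0 := by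
      rw [hθ0, ← LinearMap.comp_assoc, hγ, LinearMap.neg_comp, LinearMap.comp_assoc,
        L2.dd, LinearMap.comp_zero, neg_zero]
    apply LinearMap.ext; intro b
    simp only [LinearMap.comp_apply, LinearMap.zero_apply]
    apply hf
    rw [map_zero]
    have := LinearMap.congr_fun h1 b
    simpa using this
  set θ := GPaux.theta L1 L2 hac1 hproj1 hproj2 hhom2 θ0 hbase with hθdef
  have hθc : ∀ i : ℤ, (L1.d i).comp (θ (i+1)) + (θ i).comp (L2.d (i+1)) = 0 :=
    GPaux.theta_constraint L1 L2 hac1 hproj1 hproj2 hhom2 θ0 hbase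
  have hθc' : ∀ (i : ℤ) b, L1.d i (θ (i+1) b) + θ i (L2.d (i+1) b) = 0 :=
    fun i b => LinearMap.congr_fun (hθc i) b
  have hθz : θ 0 = θ0 := rfl
  set D : ∀ i : ℤ, (L1.X (i+1) × L2.X (i+1)) →ₗ[R] (L1.X i × L2.X i) := fun i =>
    ((L1.d i).comp (LinearMap.fst R (L1.X (i+1)) (L2.X (i+1)))
      + (θ i).comp (LinearMap.snd R (L1.X (i+1)) (L2.X (i+1)))).prod
      ((L2.d i).comp (LinearMap.snd R (L1.X (i+1)) (L2.X (i+1)))) with hDdef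
  have hD : ∀ (i : ℤ) a b, D i (a, b) = (L1.d i a + θ i b, L2.d i b) := fun i a b => rfl
  have hdd : ∀ i : ℤ, (D i).comp (D (i+1)) = 0 := by
    intro i
    apply LinearMap.ext
    rintro ⟨a, b⟩
    rw [LinearMap.comp_apply, hD, hD, LinearMap.zero_apply]
    have h1 := LinearMap.congr_fun (L1.dd i) a
    have h2 := LinearMap.congr_fun (L2.dd i) b
    have h3 := hθc' i b
    simp only [LinearMap.comp_apply, LinearMap.zero_apply] at h1 h2
    rw [Prod.ext_iff]
    constructor
    · show L1.d i (L1.d (i+1) a + θ (i+1) b) + θ i (L2.d (i+1) b) = (0 : _ × _).1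
      rw [map_add, h1, zero_add]
      exact h3
    · show L2.d i (L2.d (i+1) b) = (0 : _ × _).2
      exact h2
  refine ⟨⟨fun i => L1.X i × L2.X i, D, hdd⟩, ?_, ?_, ?_, ?_⟩
  · -- Acyclic
    intro i
    intro y
    constructor
    · intro hy
      obtain ⟨a, b⟩ := y
      have hy' : (L1.d i a + θ i b, L2.d i b) = (0 : _ × _) := hy
      have hb : L2.d i b = 0 := congrArg Prod.snd hy'
      have ha : L1.d i a + θ i b = 0 := congrArg Prod.fst hy'
      obtain ⟨b₁, rfl⟩ := (hac2 i b).mp hb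
      have h3 := hθc' i b₁
      have ha2 : L1.d i (a - θ (i+1) b₁) = 0 := by
        rw [map_sub, eq_neg_of_add_eq_zero_left ha, eq_neg_of_add_eq_zero_left h3, sub_self]
      obtain ⟨a₁, ha₁⟩ := (hac1 i _).mp ha2
      refine ⟨(a₁, b₁), ?_⟩
      show D (i+1) (a₁, b₁) = _
      rw [hD (i+1) a₁ b₁, ha₁, sub_add_cancel]
    · rintro ⟨⟨a₁, b₁⟩, rfl⟩
      exact LinearMap.congr_fun (hdd i) (a₁, b₁)
  · -- projectivity
    intro i
    haveI := hproj1 i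
    haveI := hproj2 i
    exact inferInstance
  · -- Hom-acyclicity
    intro Q _ _ hQ i
    intro y
    constructor
    · intro hy
      have hy' : ∀ z, y (D (i+1) z) = 0 := fun z => LinearMap.congr_fun hy z
      set φ₁ : L1.X (i+1) →ₗ[R] Q := y.comp (LinearMap.inl R (L1.X (i+1)) (L2.X (i+1)))
        with hφ₁def
      set φ₂ : L2.X (i+1) →ₗ[R] Q := y.comp (LinearMap.inr R (L1.X (i+1)) (L2.X (i+1)))
        with hφ₂def
      have hφ₁ : ∀ a, φ₁ a = y (a, 0) := fun a => rfl
      have hφ₂ : ∀ b, φ₂ b = y (0, b) := fun b => rfl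
      have hysum : ∀ a b, y (a, b) = φ₁ a + φ₂ b := by
        intro a b
        have : ((a, b) : L1.X (i+1) × L2.X (i+1)) = (a, 0) + (0, b) := by simp
        rw [this, map_add, hφ₁, hφ₂]
      have h1 : φ₁.comp (L1.d (i+1)) = 0 := by
        apply LinearMap.ext; intro a
        have h := hy' (a, 0)
        rw [hD (i+1) a 0] at h
        simp only [map_zero, add_zero] at h
        rw [LinearMap.comp_apply, LinearMap.zero_apply, hφ₁]
        exact h
      obtain ⟨ψ₁, hψ₁⟩ := (hhom1 Q hQ i φ₁).mp h1
      have hψ₁' : ∀ a, ψ₁ (L1.d i a) = φ₁ a := fun a => LinearMap.congr_fun hψ₁ a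
      have h2 : (φ₂ - ψ₁.comp (θ i)).comp (L2.d (i+1)) = 0 := by
        apply LinearMap.ext; intro b
        have hz := hy' (0, b)
        rw [hD (i+1) 0 b] at hz
        simp only [map_zero, zero_add] at hz
        rw [hysum] at hz
        have h3 := hθc' i b
        have h7 : θ i (L2.d (i+1) b) = - L1.d i (θ (i+1) b) := by
          rwa [add_comm, add_eq_zero_iff_eq_neg] at h3
        have h6 : φ₂ (L2.d (i+1) b) = - φ₁ (θ (i+1) b) := by
          rwa [add_comm, add_eq_zero_iff_eq_neg] at hz
        simp only [LinearMap.comp_apply, LinearMap.sub_apply, LinearMap.zero_apply]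
        rw [h6, h7, map_neg, hψ₁']
        simp
      obtain ⟨ψ₂, hψ₂⟩ := (hhom2 Q hQ i _).mp h2
      have hψ₂' : ∀ b, ψ₂ (L2.d i b) = φ₂ b - ψ₁ (θ i b) := by
        intro b
        have := LinearMap.congr_fun hψ₂ b
        simpa using this
      refine ⟨ψ₁.coprod ψ₂, ?_⟩
      apply LinearMap.ext
      rintro ⟨a, b⟩
      show (ψ₁.coprod ψ₂) (D i (a, b)) = y (a, b)
      rw [hD i a b, hysum, LinearMap.coprod_apply]
      simp only [map_add]
      rw [hψ₁', hψ₂']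
      abel
    · rintro ⟨x, rfl⟩
      show (x.comp (D i)).comp (D (i+1)) = 0
      rw [LinearMap.comp_assoc, hdd i, LinearMap.comp_zero]
  · -- IsCokerOf
    refine ⟨(f.comp f').coprod β, ?_, ?_⟩
    · intro m
      obtain ⟨b, hb⟩ := hf''s (g m)
      have h1 : g (m - β b) = 0 := by
        rw [map_sub]
        have : g (β b) = f'' b := LinearMap.congr_fun hβ b
        rw [this, hb, sub_self]
      have h2 : m - β b ∈ LinearMap.range f := by rw [hfg]; exact h1
      obtain ⟨m₀, hm₀⟩ := h2
      obtain ⟨a, ha⟩ := hf's m₀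
      refine ⟨(a, b), ?_⟩
      rw [LinearMap.coprod_apply]
      show f (f' a) + β b = m
      rw [ha, hm₀, sub_add_cancel]
    · apply le_antisymm
      · rintro ⟨a, b⟩ hab
        have hab' : f (f' a) + β b = 0 := by
          have : ((f.comp f').coprod β) (a, b) = 0 := hab
          simpa [LinearMap.coprod_apply] using this
        have hgb : f'' b = 0 := by
          have h := congrArg g hab'
          rw [map_add, map_zero, hgf, zero_add] at h
          have : g (β b) = f'' b := LinearMap.congr_fun hβ b
          rwa [this] at h
        have hbmem : b ∈ LinearMap.range (L2.d 0) := by rw [← hf''k]; exact hgb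
        obtain ⟨b₁, rfl⟩ := hbmem
        have h5 : f (f' a) = f (γ b₁) := by
          have hc : f (γ b₁) = -(β (L2.d 0 b₁)) := LinearMap.congr_fun hγ b₁
          rw [hc]
          rwa [add_eq_zero_iff_eq_neg] at hab'
        have h6 : f' a = f' (θ0 b₁) := by
          have he : f' (θ0 b₁) = γ b₁ := LinearMap.congr_fun hθ0 b₁
          rw [he]
          exact hf h5
        have h7 : a - θ0 b₁ ∈ LinearMap.range (L1.d 0) := by
          rw [← hf'k]
          show f' (a - θ0 b₁) = 0
          rw [map_sub, h6, sub_self]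
        obtain ⟨a₁, ha₁⟩ := h7
        refine ⟨(a₁, b₁), ?_⟩
        show D 0 (a₁, b₁) = _
        rw [hD 0 a₁ b₁, hθz, ha₁, sub_add_cancel]
      · rintro z ⟨⟨a, b⟩, rfl⟩
        show ((f.comp f').coprod β) (D 0 (a, b)) = 0
        rw [hD 0 a b, hθz, LinearMap.coprod_apply]
        have h8 : f' (L1.d 0 a) = 0 := by
          have : L1.d 0 a ∈ LinearMap.ker f' := by
            rw [hf'k]; exact LinearMap.mem_range_self _ a
          simpa using this
        show f (f' (L1.d 0 a + θ0 b)) + β (L2.d 0 b) = 0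
        have hθ0b : f' (θ0 b) = γ b := LinearMap.congr_fun hθ0 b
        have hγb : f (γ b) = -(β (L2.d 0 b)) := LinearMap.congr_fun hγ b
        rw [map_add, h8, zero_add, hθ0b, hγb, neg_add_cancel]
end
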